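/- arXiv:1908.06343 — 6 statements merged into one kernel-verified Lean document; each statement's English description precedes it below -/
import Mathlib

section
/- Let M > 0, let f : [0, M] → ℂ be continuous, and let ε > 0. Then there exists δ > 0 such that whenever A is a C*-algebra and a, x ∈ A satisfy: a is positive, ‖a‖ ≤ M, ‖x‖ ≤ M, and ‖a x − x a‖ < δ, then ‖f(a) x − x f(a)‖ < ε. -/
open Filter Topology
open scoped ENNReal

namespace RC

/-- Cuntz subequivalence `a ≾ b` in an algebra: some sequence `vₙ b vₙ*` converges to `a`. -/
def CuntzSubeq {M : Type*} [Mul M] [Star M] [TopologicalSpace M] (a b : M) : Prop :=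
  ∃ v : ℕ → M, Tendsto (fun n => v n * b * star (v n)) atTop (𝓝 a)

/-- Cuntz subequivalence with the implementing sequence taken in the subset `S`
(e.g. a C*-subalgebra). -/
def CuntzSubeqIn {M : Type*} [Mul M] [Star M] [TopologicalSpace M] (S : Set M) (a b : M) :
    Prop :=
  ∃ v : ℕ → M, (∀ n, v n ∈ S) ∧ Tendsto (fun n => v n * b * star (v n)) atTop (𝓝 a)

/-- `(a - ε)₊`, the continuous functional calculus of `a` applied to `t ↦ max (t - ε) 0`,
in a unital algebra. -/
noncomputable def posCut {A : Type*} [Ring A] [StarRing A] [TopologicalSpace A] [Algebra ℝ A]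
    [ContinuousFunctionalCalculus ℝ A (IsSelfAdjoint : A → Prop)] (ε : ℝ) (a : A) : A :=
  cfc (fun t : ℝ => max (t - ε) 0) a

/-- `(a - ε)₊` in a non-unital C*-algebra, via the non-unital functional calculus. -/
noncomputable def posCutN {A : Type*} [NonUnitalCStarAlgebra A] (ε : ℝ) (a : A) : A :=
  cfcₙ (fun t : ℝ => max (t - ε) 0) a

/-- An element of the form `c* c`; in a C*-algebra this is precisely positivity.  It is used
for positivity in matrix algebras over a C*-algebra (which carry no norm in Mathlib). -/
def StarPos {M : Type*} [Mul M] [Star M] (b : M) : Prop := ∃ c : M, b = star c * c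

/-- `mulPow b k = b ^ (k + 1)`, defined without a unit. -/
def mulPow {M : Type*} [Mul M] (b : M) : ℕ → M
  | 0 => b
  | n + 1 => mulPow b n * b

/-- Conditions (i)–(iii) of the definition of a quasitrace: `τ(x*x) = τ(xx*) ≥ 0`,
additivity on selfadjoint decompositions `a + i b`, and linearity on every commutative
closed star subalgebra. -/
def IsQuasitracePre {M : Type*} [NonUnitalRing M] [StarRing M] [Module ℂ M]
    [TopologicalSpace M] (τ : M → ℂ) : Prop :=
  (∀ x : M, τ (star x * x) = τ (x * star x)) ∧
  (∀ x : M, ∃ r : ℝ, 0 ≤ r ∧ τ (star x * x) = r) ∧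
  (∀ a b : M, IsSelfAdjoint a → IsSelfAdjoint b →
      τ (a + Complex.I • b) = τ a + Complex.I * τ b) ∧
  (∀ B : NonUnitalStarSubalgebra ℂ M, IsClosed (B : Set M) →
      (∀ x ∈ B, ∀ y ∈ B, x * y = y * x) →
      (∀ x ∈ B, ∀ y ∈ B, τ (x + y) = τ x + τ y) ∧
        ∀ (c : ℂ), ∀ x ∈ B, τ (c • x) = c * τ x)

/-- A quasitrace (2-quasitrace): conditions (i)–(iii) together with condition (iv),
the existence of an extension to `M₂` satisfying (i)–(iii) with `τ x = τ₂ (x ⊗ e₁₁)`. -/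
def IsQuasitrace {M : Type*} [NonUnitalRing M] [StarRing M] [Module ℂ M]
    [TopologicalSpace M] (τ : M → ℂ) : Prop :=
  IsQuasitracePre τ ∧
    ∃ τ₂ : Matrix (Fin 2) (Fin 2) M → ℂ, IsQuasitracePre τ₂ ∧
      ∀ x : M, τ x = τ₂ (Matrix.single 0 0 x)

/-- `σ` is the canonical extension `τₙ` of the quasitrace `τ` to `Mₙ`:
it is a quasitrace with `σ (a ⊗ e_jj) = τ a` for all `a` and `j`.
By Blanchard–Handelman such an extension exists and is unique. -/
def IsMatrixExt {M : Type*} [NonUnitalRing M] [StarRing M] [Module ℂ M] [TopologicalSpace M]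
    {n : ℕ} (σ : Matrix (Fin n) (Fin n) M → ℂ) (τ : M → ℂ) : Prop :=
  IsQuasitrace σ ∧ ∀ (a : M) (j : Fin n), σ (Matrix.single j j a) = τ a

/-- `d = d_σ(a) = lim_k σ(a^{1/k})`: for every sequence `b k` of positive `(k+1)`-st roots of
`a`, `σ (b k)` converges to `d`.  (In a C*-algebra positive roots exist and are unique, so this
characterizes the usual `d_τ`.) -/
def HasDTau {N : Type*} [Mul N] [Star N] (σ : N → ℂ) (a : N) (d : ℝ) : Prop :=
  ∀ b : ℕ → N, (∀ k, StarPos (b k) ∧ mulPow (b k) k = a) →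
    Tendsto (fun k => (σ (b k)).re) atTop (𝓝 d)

/-- `r`-comparison for the algebra `M` with unit `e`: whenever `a b` are positive elements of a
matrix algebra over `M` with `d_τ(a) + r < d_τ(b)` for every normalized quasitrace `τ`
(evaluated through its canonical matrix extension), then `a ≾ b`. -/
def RComparison {M : Type*} [NonUnitalRing M] [StarRing M] [Module ℂ M] [TopologicalSpace M]
    (e : M) (r : ℝ) : Prop :=
  ∀ (m : ℕ) (a b : Matrix (Fin m) (Fin m) M), StarPos a → StarPos b →
    (∀ (τ : M → ℂ) (σ : Matrix (Fin m) (Fin m) M → ℂ) (da db : ℝ),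
        IsQuasitrace τ → τ e = 1 → IsMatrixExt σ τ →
        HasDTau σ a da → HasDTau σ b db → da + r < db) →
    CuntzSubeq a b

/-- The radius of comparison of the algebra `M` with unit `e`: the infimum (in `ℝ≥0∞`, hence
`∞` if there is none) of all `r ≥ 0` such that `M` has `r`-comparison. -/
noncomputable def radiusCmp {M : Type*} [NonUnitalRing M] [StarRing M] [Module ℂ M]
    [TopologicalSpace M] (e : M) : ℝ≥0∞ :=
  sInf {x : ℝ≥0∞ | ∃ r : ℝ, 0 ≤ r ∧ x = ENNReal.ofReal r ∧ RComparison e r}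

/-- Stable finiteness: for every `n`, no projection in `Mₙ(A)` is Murray–von Neumann
equivalent to a proper subprojection of itself. -/
def StablyFinite (A : Type*) [Ring A] [StarRing A] : Prop :=
  ∀ (n : ℕ) (p q v : Matrix (Fin n) (Fin n) A),
    p * p = p → star p = p → q * q = q → star q = q →
    p * q = q → q ≠ p → star v * v = p → v * star v = q → False

/-- Simplicity of a C*-algebra: the only closed two-sided ideals are `0` and everything. -/
def CStarSimple (A : Type*) [NonUnitalNonAssocRing A] [TopologicalSpace A] : Prop :=
  ∀ I : TwoSidedIdeal A, IsClosed (I : Set A) →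
    (I : Set A) = {0} ∨ (I : Set A) = Set.univ

/-- `p` is full: every closed two-sided ideal containing `p` is everything, i.e. the closed
two-sided ideal generated by `p` is the whole algebra. -/
def IsFullIn {A : Type*} [NonUnitalNonAssocRing A] [TopologicalSpace A] (p : A) : Prop :=
  ∀ I : TwoSidedIdeal A, IsClosed (I : Set A) → p ∈ I → (I : Set A) = Set.univ

/-- The corner `p B p = {x | p x p = x}` of an algebra `B` by a projection `p`,
as a (non-unital) star subalgebra of `B`; its unit is `p`. -/
def cornerAlg {B : Type*} [NonUnitalRing B] [Module ℂ B] [SMulCommClass ℂ B B]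
    [IsScalarTower ℂ B B] [StarRing B] (p : B) (hp1 : p * p = p) (hp2 : star p = p) :
    NonUnitalStarSubalgebra ℂ B where
  carrier := {x | p * x * p = x}
  add_mem' := by
    intro x y hx hy
    simp only [Set.mem_setOf_eq] at *
    rw [mul_add, add_mul, hx, hy]
  zero_mem' := by simp
  mul_mem' := by
    intro x y hx hy
    simp only [Set.mem_setOf_eq] at *
    have hpp : ∀ z : B, p * (p * z) = p * z := fun z => by rw [← mul_assoc, hp1]
    conv_lhs => rw [← hx, ← hy]
    conv_rhs => rw [← hx, ← hy]
    simp only [mul_assoc, hpp, hp1]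
  smul_mem' := by
    intro c x hx
    simp only [Set.mem_setOf_eq] at *
    rw [mul_smul_comm, smul_mul_assoc, hx]
  star_mem' := by
    intro x hx
    simp only [Set.mem_setOf_eq] at *
    conv_rhs => rw [← hx]
    rw [star_mul, star_mul, hp2, mul_assoc]

theorem p_mem_corner {B : Type*} [NonUnitalRing B] [Module ℂ B] [SMulCommClass ℂ B B]
    [IsScalarTower ℂ B B] [StarRing B] (p : B) (hp1 : p * p = p) (hp2 : star p = p) :
    p ∈ cornerAlg p hp1 hp2 := by
  show p * p * p = p
  rw [hp1, hp1]

/-- The fixed point algebra `A^α = {a | α_g a = a ∀ g}` of an action,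
as a star subalgebra of `A`. -/
def fixedAlg {G A : Type*} [Group G] [NonUnitalRing A] [Module ℂ A] [StarRing A]
    (α : G → A ≃⋆ₐ[ℂ] A) : NonUnitalStarSubalgebra ℂ A where
  carrier := {a | ∀ g, α g a = a}
  add_mem' := by
    intro x y hx hy g
    rw [map_add, hx g, hy g]
  zero_mem' := fun g => map_zero (α g)
  mul_mem' := by
    intro x y hx hy g
    rw [map_mul, hx g, hy g]
  smul_mem' := by
    intro c x hx g
    rw [map_smul, hx g]
  star_mem' := by
    intro x hx g
    rw [map_star, hx g]

theorem one_mem_fixedAlg {G A : Type*} [Group G] [Ring A] [Module ℂ A] [StarRing A]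
    (α : G → A ≃⋆ₐ[ℂ] A) : (1 : A) ∈ fixedAlg α := fun g => map_one (α g)

/-- The weak tracial Rokhlin property for an action `α` of a finite group `G` on a unital
C*-algebra. -/
def WeakTracialRokhlin {G A : Type*} [Group G] [Fintype G] [NormedRing A] [StarRing A]
    [PartialOrder A] [Module ℂ A] (α : G → A ≃⋆ₐ[ℂ] A) : Prop :=
  ∀ (ε : ℝ), 0 < ε → ∀ (F : Finset A) (x : A), 0 ≤ x → ‖x‖ = 1 →
    ∃ f : G → A,
      (∀ g, 0 ≤ f g ∧ ‖f g‖ ≤ 1) ∧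
      (∀ g h, g ≠ h → f g * f h = 0) ∧
      (∀ g, ∀ a ∈ F, ‖a * f g - f g * a‖ < ε) ∧
      (∀ g h, ‖α g (f h) - f (g * h)‖ < ε) ∧
      CuntzSubeq (1 - ∑ g, f g) x ∧
      1 - ε < ‖(∑ g, f g) * x * (∑ g, f g)‖

/-- The Rokhlin property for an action `α` of a finite group `G` on a unital C*-algebra. -/
def RokhlinProperty {G A : Type*} [Group G] [Fintype G] [NormedRing A] [StarRing A]
    [Module ℂ A] (α : G → A ≃⋆ₐ[ℂ] A) : Prop :=
  ∀ (ε : ℝ), 0 < ε → ∀ (F : Finset A),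
    ∃ e : G → A,
      (∀ g, e g * e g = e g ∧ star (e g) = e g) ∧
      (∀ g h, g ≠ h → e g * e h = 0) ∧
      (∑ g, e g) = 1 ∧
      (∀ g h, ‖α g (e h) - e (g * h)‖ < ε) ∧
      (∀ g, ∀ a ∈ F, ‖e g * a - a * e g‖ < ε)

end RC

open RC

universe u

theorem commPowAux {A : Type*} [NormedRing A] (a x : A) (M : ℝ) (ha : ‖a‖ ≤ M) (hM : 0 ≤ M) :
    ∀ n : ℕ, ‖a ^ n * x - x * a ^ n‖ ≤ n * (M + 1) ^ n * ‖a * x - x * a‖ := by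
  have hpow : ∀ n : ℕ, ‖a ^ (n + 1)‖ ≤ (M + 1) ^ (n + 1) := fun n => by
    calc ‖a ^ (n+1)‖ ≤ ‖a‖ ^ (n+1) := norm_pow_le' a (Nat.succ_pos n)
      _ ≤ (M + 1) ^ (n+1) := pow_le_pow_left₀ (norm_nonneg a) (by linarith) _
  intro n
  induction n with
  | zero => simp
  | succ n ih =>
    have key : a ^ (n+1) * x - x * a ^ (n+1)
        = a * (a ^ n * x - x * a ^ n) + (a * x - x * a) * a ^ n := by
      rw [pow_succ']
      noncomm_ring
    cases n with
    | zero =>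
      have hD : (0:ℝ) ≤ ‖a * x - x * a‖ := norm_nonneg _
      simp only [zero_add, pow_one, Nat.cast_one, one_mul]
      nlinarith
    | succ k =>
      rw [key]
      have h1 : ‖a * (a ^ (k+1) * x - x * a ^ (k+1))‖ ≤ M * ((k+1) * (M + 1) ^ (k+1) * ‖a * x - x * a‖) :=
        (norm_mul_le _ _).trans (mul_le_mul ha (by exact_mod_cast ih) (norm_nonneg _) hM)
      have hpn : ‖a ^ (k+1)‖ ≤ (M + 1) ^ (k+1) := hpow k
      have h2 : ‖(a * x - x * a) * a ^ (k+1)‖ ≤ ‖a * x - x * a‖ * (M + 1) ^ (k+1) :=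
        (norm_mul_le _ _).trans (by gcongr)
      calc ‖_ + _‖ ≤ _ + _ := norm_add_le _ _
        _ ≤ M * ((k+1) * (M + 1) ^ (k+1) * ‖a * x - x * a‖) + ‖a * x - x * a‖ * (M + 1) ^ (k+1) :=
            add_le_add h1 h2
        _ ≤ ((k + 1) + 1 : ℕ) * (M + 1) ^ ((k + 1) + 1) * ‖a * x - x * a‖ := by
            push_cast
            simp only [pow_succ]
            have hQ : (0:ℝ) ≤ (M + 1) ^ k := pow_nonneg (by linarith) _
            have hD : (0:ℝ) ≤ ‖a * x - x * a‖ := norm_nonneg _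
            nlinarith [mul_nonneg (mul_nonneg (mul_nonneg hQ
              (by linarith : (0:ℝ) ≤ M + 1)) (by positivity : (0:ℝ) ≤ (k:ℝ) + M + 1)) hD]

/-- Let `M > 0`, let `f : [0, M] → ℂ` be continuous, and let `ε > 0`.  Then there
exists `δ > 0` such that whenever `A` is a C*-algebra and `a, x ∈ A` satisfy `a ≥ 0`,
`‖a‖ ≤ M`, `‖x‖ ≤ M` and `‖a x - x a‖ < δ`, then `‖f(a) x - x f(a)‖ < ε`.  Here `f(a)` is the
continuous functional calculus of the positive element `a` (whose spectrum lies in `[0, M]`)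
applied to `f`, realized via the complex functional calculus. -/
theorem statement0 (M : ℝ) (hM : 0 < M) (f : ℝ → ℂ) (hf : ContinuousOn f (Set.Icc 0 M))
    (ε : ℝ) (hε : 0 < ε) :
    ∃ δ : ℝ, 0 < δ ∧
      ∀ (A : Type u) [CStarAlgebra A] [PartialOrder A] [StarOrderedRing A],
        ∀ a x : A, 0 ≤ a → ‖a‖ ≤ M → ‖x‖ ≤ M → ‖a * x - x * a‖ < δ →
          ‖cfc (fun z : ℂ => f z.re) a * x - x * cfc (fun z : ℂ => f z.re) a‖ < ε := by
  have hM1 : (0:ℝ) < M + 1 := by linarith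
  set ε₁ := ε / (8 * (M + 1)) with hε₁def
  have hε₁ : 0 < ε₁ := by positivity
  obtain ⟨p₁, hp₁⟩ := exists_polynomial_near_of_continuousOn 0 M (fun t => (f t).re)
    (Complex.continuous_re.comp_continuousOn hf) ε₁ hε₁
  obtain ⟨p₂, hp₂⟩ := exists_polynomial_near_of_continuousOn 0 M (fun t => (f t).im)
    (Complex.continuous_im.comp_continuousOn hf) ε₁ hε₁
  set q : Polynomial ℂ :=
    p₁.map (algebraMap ℝ ℂ) + Polynomial.C Complex.I * p₂.map (algebraMap ℝ ℂ) with hq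
  have hqeval : ∀ t : ℝ, q.eval (t : ℂ)
      = (↑(p₁.eval t) : ℂ) + Complex.I * (↑(p₂.eval t) : ℂ) := by
    intro t
    have e1 : (p₁.map (algebraMap ℝ ℂ)).eval ((t:ℂ)) = (↑(p₁.eval t) : ℂ) := by
      rw [show ((t:ℂ)) = algebraMap ℝ ℂ t from rfl, Polynomial.eval_map,
        Polynomial.eval₂_hom]
      rfl
    have e2 : (p₂.map (algebraMap ℝ ℂ)).eval ((t:ℂ)) = (↑(p₂.eval t) : ℂ) := by
      rw [show ((t:ℂ)) = algebraMap ℝ ℂ t from rfl, Polynomial.eval_map,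
        Polynomial.eval₂_hom]
      rfl
    simp [hq, e1, e2]
  have happrox : ∀ t ∈ Set.Icc (0:ℝ) M, ‖f t - q.eval (t : ℂ)‖ < 2 * ε₁ := by
    intro t ht
    have h1 := hp₁ t ht
    have h2 := hp₂ t ht
    calc ‖f t - q.eval (t:ℂ)‖ ≤ |(f t - q.eval (t:ℂ)).re| + |(f t - q.eval (t:ℂ)).im| :=
          Complex.norm_le_abs_re_add_abs_im _
      _ < 2 * ε₁ := by
          rw [hqeval t]
          simp only [Complex.sub_re, Complex.sub_im, Complex.add_re, Complex.add_im,
            Complex.ofReal_re, Complex.ofReal_im, Complex.mul_re, Complex.mul_im,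
            Complex.I_re, Complex.I_im]
          rw [abs_sub_comm] at h1 h2
          norm_num
          linarith [h1, h2]
  set C : ℝ := ∑ i ∈ Finset.range (q.natDegree + 1), ‖q.coeff i‖ * (i * (M + 1) ^ i) with hC
  have hC0 : 0 ≤ C := Finset.sum_nonneg fun i _ => by positivity
  refine ⟨min 1 (ε / (2 * (C + 1))), by positivity, ?_⟩
  intro A _ _ _ a x ha hnorma hnormx hcomm
  rcases subsingleton_or_nontrivial A with hA | hA
  · rw [Subsingleton.elim (cfc (fun z : ℂ => f z.re) a * x - x * cfc (fun z : ℂ => f z.re) a)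
      (0 : A)]
    simpa using hε
  have hsa : IsSelfAdjoint a := .of_nonneg ha
  have hstar : IsStarNormal a := hsa.isStarNormal
  have hre : ∀ z ∈ spectrum ℂ a, z = z.re := SpectrumRestricts.real_iff.mp hsa.spectrumRestricts
  have hmem : ∀ z ∈ spectrum ℂ a, z.re ∈ Set.Icc (0:ℝ) M := by
    intro z hz
    have hz' : z.re ∈ spectrum ℝ a := by
      rw [← spectrum.algebraMap_mem_iff ℂ]
      simpa using ((hre z hz).symm ▸ hz)
    refine ⟨spectrum_nonneg_of_nonneg ha hz', ?_⟩
    have h1 : ‖z‖ ≤ M := (spectrum.norm_le_norm_of_mem hz).trans hnorma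
    calc z.re ≤ |z.re| := le_abs_self _
      _ = ‖z‖ := by
          conv_rhs => rw [hre z hz]
          rw [Complex.norm_real, Real.norm_eq_abs]
      _ ≤ M := h1
  have hg : ContinuousOn (fun z : ℂ => f z.re) (spectrum ℂ a) :=
    hf.comp Complex.continuous_re.continuousOn hmem
  set P : A := Polynomial.aeval a q with hP
  have hPdef : cfc (fun z : ℂ => q.eval z) a = P := cfc_polynomial q a hstar
  have hdiff : ‖cfc (fun z : ℂ => f z.re) a - P‖ ≤ 2 * ε₁ := by
    rw [← hPdef, ← cfc_sub _ _ a hg (Polynomial.continuous _).continuousOn]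
    refine norm_cfc_le (by positivity) fun z hz => ?_
    calc ‖f z.re - q.eval z‖ = ‖f z.re - q.eval ((z.re : ℝ) : ℂ)‖ := by rw [← hre z hz]
      _ ≤ 2 * ε₁ := (happrox _ (hmem z hz)).le
  have hcomm' : ‖a * x - x * a‖ < ε / (2 * (C + 1)) :=
    lt_of_lt_of_le hcomm (min_le_right _ _)
  have hPcomm : ‖P * x - x * P‖ < ε / 2 := by
    have hrepr : P = ∑ i ∈ Finset.range (q.natDegree + 1), q.coeff i • a ^ i :=
      Polynomial.aeval_eq_sum_range a
    have key : P * x - x * P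
        = ∑ i ∈ Finset.range (q.natDegree + 1), q.coeff i • (a ^ i * x - x * a ^ i) := by
      rw [hrepr, Finset.sum_mul, Finset.mul_sum, ← Finset.sum_sub_distrib]
      refine Finset.sum_congr rfl fun i _ => ?_
      rw [smul_mul_assoc, mul_smul_comm, smul_sub]
    rw [key]
    calc ‖∑ i ∈ Finset.range (q.natDegree + 1), q.coeff i • (a ^ i * x - x * a ^ i)‖
        ≤ ∑ i ∈ Finset.range (q.natDegree + 1), ‖q.coeff i • (a ^ i * x - x * a ^ i)‖ :=
          norm_sum_le _ _
      _ ≤ ∑ i ∈ Finset.range (q.natDegree + 1),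
          ‖q.coeff i‖ * (i * (M + 1) ^ i * ‖a * x - x * a‖) := by
          refine Finset.sum_le_sum fun i _ => ?_
          rw [norm_smul]
          exact mul_le_mul_of_nonneg_left (commPowAux a x M hnorma hM.le i) (norm_nonneg _)
      _ = C * ‖a * x - x * a‖ := by
          rw [hC, Finset.sum_mul]
          refine Finset.sum_congr rfl fun i _ => by ring
      _ ≤ C * (ε / (2 * (C + 1))) := mul_le_mul_of_nonneg_left hcomm'.le hC0
      _ < ε / 2 := by
          rw [mul_div_assoc', div_lt_div_iff₀ (by positivity) (by norm_num)]
          nlinarith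
  set F : A := cfc (fun z : ℂ => f z.re) a with hF
  have key2 : F * x - x * F = (F - P) * x + (P * x - x * P) + x * (P - F) := by noncomm_ring
  rw [key2]
  have h1 : ‖(F - P) * x‖ ≤ 2 * ε₁ * M :=
    (norm_mul_le _ _).trans (mul_le_mul hdiff hnormx (norm_nonneg _) (by positivity))
  have h2 : ‖x * (P - F)‖ ≤ M * (2 * ε₁) :=
    (norm_mul_le _ _).trans
      (mul_le_mul hnormx (by rwa [norm_sub_rev]) (norm_nonneg _) hM.le)
  have h4 : 2 * ε₁ * M + M * (2 * ε₁) = 4 * M * ε / (8 * (M + 1)) := by rw [hε₁def]; ring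
  have h5 : 4 * M * ε / (8 * (M + 1)) ≤ ε / 2 := by
    rw [div_le_div_iff₀ (by positivity) (by norm_num)]
    nlinarith
  calc ‖(F - P) * x + (P * x - x * P) + x * (P - F)‖
      ≤ ‖(F - P) * x + (P * x - x * P)‖ + ‖x * (P - F)‖ := norm_add_le _ _
    _ ≤ ‖(F - P) * x‖ + ‖P * x - x * P‖ + ‖x * (P - F)‖ := by
        linarith [norm_add_le ((F - P) * x) (P * x - x * P)]
    _ < 2 * ε₁ * M + ε / 2 + M * (2 * ε₁) := by linarith
    _ ≤ ε := by linarith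
end

section
/- Let f, g : [0, ∞) → [0, ∞) be continuous functions with f(0) = g(0) = 0, let ε > 0, and let M > 0. Then there exists δ > 0 such that whenever A is a C*-algebra and a, b are positive elements of A satisfying ‖a b‖ < δ and ‖a‖, ‖b‖ ≤ M, then ‖f(a) g(b)‖ < ε. -/
open Filter Topology
open scoped ENNReal

open RC

universe u

section Aux

variable {A : Type*} [NonUnitalCStarAlgebra A]

lemma cfcₙ_pow_eq_mulPow (a : A) (ha : IsSelfAdjoint a) (i : ℕ) :
    cfcₙ (fun t : ℝ => t ^ (i + 1)) a = mulPow a i := by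
  induction i with
  | zero => simpa [mulPow] using cfcₙ_id' ℝ a
  | succ n ih =>
    have h : (fun t : ℝ => t ^ (n + 1 + 1)) = fun t : ℝ => t ^ (n + 1) * t := by
      ext t; ring
    rw [h, cfcₙ_mul (f := fun t : ℝ => t ^ (n + 1)) (g := fun t : ℝ => t) a
      (by fun_prop) (by simp) (by fun_prop) (by simp), ih, cfcₙ_id' ℝ a]
    rfl

lemma quasispec_subset_Icc {A : Type*} [NonUnitalCStarAlgebra A] [PartialOrder A]
    [StarOrderedRing A] (a : A) (ha : 0 ≤ a) :
    quasispectrum ℝ a ⊆ Set.Icc 0 ‖a‖ := by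
  intro x hx
  refine ⟨quasispectrum_nonneg_of_nonneg a ha x hx, ?_⟩
  have h := (QuasispectrumRestricts.nnreal_of_nonneg ha).le_nnreal_iff (r := ‖a‖₊) |>.mp
    (fun y hy => CStarAlgebra.le_nnnorm_of_mem_quasispectrum hy) x hx
  exact_mod_cast h

lemma cfcₙ_polyeval (a : A) (ha : IsSelfAdjoint a) (p : Polynomial ℝ) (hp : p.coeff 0 = 0) :
    cfcₙ (fun t : ℝ => p.eval t) a
      = ∑ i ∈ Finset.range p.natDegree, p.coeff (i + 1) • mulPow a i := by
  have h1 : (fun t : ℝ => p.eval t)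
      = ∑ i ∈ Finset.range p.natDegree, fun t : ℝ => p.coeff (i + 1) * t ^ (i + 1) := by
    ext t
    rw [Polynomial.eval_eq_sum_range, Finset.sum_range_succ']
    simp [hp, Finset.sum_apply]
  rw [h1, cfcₙ_sum _ a _ (fun i _ => by fun_prop) (fun i _ => by simp)]
  refine Finset.sum_congr rfl fun i _ => ?_
  rw [cfcₙ_const_mul _ _ a (by fun_prop) (by simp), cfcₙ_pow_eq_mulPow a ha i]

lemma mulPow_mul_norm (a : A) (i : ℕ) (x : A) :
    ‖mulPow a i * x‖ ≤ ‖a‖ ^ i * ‖a * x‖ := by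
  induction i generalizing x with
  | zero => simpa [mulPow] using le_refl ‖a * x‖
  | succ n ih =>
    have h : mulPow a (n + 1) * x = mulPow a n * (a * x) := by
      show mulPow a n * a * x = _; rw [mul_assoc]
    rw [h]
    calc ‖mulPow a n * (a * x)‖ ≤ ‖a‖ ^ n * ‖a * (a * x)‖ := ih _
      _ ≤ ‖a‖ ^ n * (‖a‖ * ‖a * x‖) := by
          gcongr
          exact norm_mul_le _ _
      _ = ‖a‖ ^ (n + 1) * ‖a * x‖ := by ring

lemma norm_mul_mulPow (b : A) (j : ℕ) (x : A) :
    ‖x * mulPow b j‖ ≤ ‖x * b‖ * ‖b‖ ^ j := by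
  induction j with
  | zero => simpa [mulPow] using le_refl ‖x * b‖
  | succ n ih =>
    have h : x * mulPow b (n + 1) = x * mulPow b n * b := by
      rw [show mulPow b (n + 1) = mulPow b n * b from rfl, mul_assoc]
    rw [h]
    calc ‖x * mulPow b n * b‖ ≤ ‖x * mulPow b n‖ * ‖b‖ := norm_mul_le _ _
      _ ≤ ‖x * b‖ * ‖b‖ ^ n * ‖b‖ := mul_le_mul_of_nonneg_right ih (norm_nonneg b)
      _ = ‖x * b‖ * ‖b‖ ^ (n + 1) := by ring

lemma mulPow_mul_mulPow_norm (a b : A) (i j : ℕ) :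
    ‖mulPow a i * mulPow b j‖ ≤ ‖a‖ ^ i * (‖a * b‖ * ‖b‖ ^ j) := by
  calc ‖mulPow a i * mulPow b j‖ ≤ ‖a‖ ^ i * ‖a * mulPow b j‖ := mulPow_mul_norm a i _
    _ ≤ ‖a‖ ^ i * (‖a * b‖ * ‖b‖ ^ j) := by gcongr; exact norm_mul_mulPow b j a

end Aux

/-- Let `f, g : [0, ∞) → [0, ∞)` be continuous with `f 0 = g 0 = 0`, let `ε > 0`
and `M > 0`.  Then there is `δ > 0` such that whenever `A` is a C*-algebra and `a, b ≥ 0` in `A`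
satisfy `‖a b‖ < δ` and `‖a‖, ‖b‖ ≤ M`, then `‖f(a) g(b)‖ < ε`, where `f(a)`, `g(b)` are given
by the (non-unital) continuous functional calculus. -/
theorem statement1 (f g : ℝ → ℝ)
    (hf : ContinuousOn f (Set.Ici 0)) (hg : ContinuousOn g (Set.Ici 0))
    (hf0 : f 0 = 0) (hg0 : g 0 = 0)
    (hfnn : ∀ t ∈ Set.Ici (0 : ℝ), 0 ≤ f t) (hgnn : ∀ t ∈ Set.Ici (0 : ℝ), 0 ≤ g t)
    (ε : ℝ) (hε : 0 < ε) (M : ℝ) (hM : 0 < M) :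
    ∃ δ : ℝ, 0 < δ ∧
      ∀ (A : Type u) [NonUnitalCStarAlgebra A] [PartialOrder A] [StarOrderedRing A],
        ∀ a b : A, 0 ≤ a → 0 ≤ b → ‖a * b‖ < δ → ‖a‖ ≤ M → ‖b‖ ≤ M →
          ‖cfcₙ f a * cfcₙ g b‖ < ε := by
  -- sup bounds for f, g on [0, M]
  obtain ⟨Cf, hCf⟩ := (isCompact_Icc : IsCompact (Set.Icc (0:ℝ) M)).exists_bound_of_continuousOn
    (hf.mono Set.Icc_subset_Ici_self)
  obtain ⟨Cg, hCg⟩ := (isCompact_Icc : IsCompact (Set.Icc (0:ℝ) M)).exists_bound_of_continuousOn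
    (hg.mono Set.Icc_subset_Ici_self)
  have hCf0 : (0:ℝ) ≤ Cf := (norm_nonneg (f 0)).trans (hCf 0 ⟨le_refl 0, hM.le⟩)
  have hCg0 : (0:ℝ) ≤ Cg := (norm_nonneg (g 0)).trans (hCg 0 ⟨le_refl 0, hM.le⟩)
  set η : ℝ := min 1 (ε / (2 * (Cf + Cg + 2))) with hηdef
  have hη0 : 0 < η := lt_min one_pos (by positivity)
  have hη1 : η ≤ 1 := min_le_left _ _
  have hη2 : η ≤ ε / (2 * (Cf + Cg + 2)) := min_le_right _ _
  have hkey : η * (2 * (Cf + Cg + 2)) ≤ ε := by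
    rw [← le_div_iff₀ (by positivity)]; exact hη2
  have hηsmall : η * Cg + (Cf + η) * η < ε / 2 := by nlinarith
  -- polynomial approximations with zero constant term
  obtain ⟨p₀, hp₀⟩ := exists_polynomial_near_of_continuousOn 0 M f
    (hf.mono Set.Icc_subset_Ici_self) (η / 2) (by positivity)
  obtain ⟨q₀, hq₀⟩ := exists_polynomial_near_of_continuousOn 0 M g
    (hg.mono Set.Icc_subset_Ici_self) (η / 2) (by positivity)
  set p : Polynomial ℝ := p₀ - Polynomial.C (p₀.coeff 0) with hpdef
  set q : Polynomial ℝ := q₀ - Polynomial.C (q₀.coeff 0) with hqdef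
  have hpc : p.coeff 0 = 0 := by simp [hpdef]
  have hqc : q.coeff 0 = 0 := by simp [hqdef]
  have happrox : ∀ (r₀ : Polynomial ℝ) (h : ℝ → ℝ), h 0 = 0 →
      (∀ x ∈ Set.Icc (0:ℝ) M, |r₀.eval x - h x| < η / 2) →
      ∀ x ∈ Set.Icc (0:ℝ) M, |(r₀ - Polynomial.C (r₀.coeff 0)).eval x - h x| < η := by
    intro r₀ h h0 hr x hx
    have h0' := hr 0 ⟨le_refl 0, hM.le⟩
    rw [h0, sub_zero, ← Polynomial.coeff_zero_eq_eval_zero] at h0'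
    have hev : (r₀ - Polynomial.C (r₀.coeff 0)).eval x = r₀.eval x - r₀.coeff 0 := by simp
    rw [hev, show r₀.eval x - r₀.coeff 0 - h x = (r₀.eval x - h x) - r₀.coeff 0 by ring]
    calc |(r₀.eval x - h x) - r₀.coeff 0| ≤ |r₀.eval x - h x| + |r₀.coeff 0| := abs_sub _ _
      _ < η / 2 + η / 2 := add_lt_add (hr x hx) h0'
      _ = η := by ring
  have hp := happrox p₀ f hf0 hp₀
  have hq := happrox q₀ g hg0 hq₀
  set Kf : ℝ := ∑ i ∈ Finset.range p.natDegree, |p.coeff (i + 1)| * M ^ i with hKfdef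
  set Kg : ℝ := ∑ j ∈ Finset.range q.natDegree, |q.coeff (j + 1)| * M ^ j with hKgdef
  have hKf0 : 0 ≤ Kf := Finset.sum_nonneg fun i _ => by positivity
  have hKg0 : 0 ≤ Kg := Finset.sum_nonneg fun j _ => by positivity
  have hKK : 0 ≤ Kf * Kg := mul_nonneg hKf0 hKg0
  have hD : (0:ℝ) < 2 * (Kf * Kg + 1) := by nlinarith
  refine ⟨ε / (2 * (Kf * Kg + 1)), div_pos hε hD, ?_⟩
  set δ : ℝ := ε / (2 * (Kf * Kg + 1)) with hδdef
  have hδD : δ * (2 * (Kf * Kg + 1)) = ε := div_mul_cancel₀ _ (ne_of_gt hD)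
  have hδ0 : 0 < δ := div_pos hε hD
  intro A _inst _ _ a b ha hb hab hna hnb
  have hsa : IsSelfAdjoint a := ha.isSelfAdjoint
  have hsb : IsSelfAdjoint b := hb.isSelfAdjoint
  have sa : quasispectrum ℝ a ⊆ Set.Icc 0 M :=
    (quasispec_subset_Icc a ha).trans (Set.Icc_subset_Icc_right hna)
  have sb : quasispectrum ℝ b ⊆ Set.Icc 0 M :=
    (quasispec_subset_Icc b hb).trans (Set.Icc_subset_Icc_right hnb)
  have hfc : ContinuousOn f (quasispectrum ℝ a) := hf.mono (sa.trans Set.Icc_subset_Ici_self)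
  have hgc : ContinuousOn g (quasispectrum ℝ b) := hg.mono (sb.trans Set.Icc_subset_Ici_self)
  set Pa : A := ∑ i ∈ Finset.range p.natDegree, p.coeff (i + 1) • mulPow a i with hPadef
  set Pb : A := ∑ j ∈ Finset.range q.natDegree, q.coeff (j + 1) • mulPow b j with hPbdef
  have hPa : cfcₙ (fun t : ℝ => p.eval t) a = Pa := cfcₙ_polyeval a hsa p hpc
  have hPb : cfcₙ (fun t : ℝ => q.eval t) b = Pb := cfcₙ_polyeval b hsb q hqc
  have herr_a : ‖cfcₙ f a - Pa‖ ≤ η := by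
    rw [← hPa, ← cfcₙ_sub (f := f) (g := fun t : ℝ => p.eval t) a hfc hf0 (by fun_prop)
      (by simp [← Polynomial.coeff_zero_eq_eval_zero, hpc])]
    refine norm_cfcₙ_le fun x hx => ?_
    rw [Real.norm_eq_abs, abs_sub_comm]
    exact (hp x (sa hx)).le
  have herr_b : ‖cfcₙ g b - Pb‖ ≤ η := by
    rw [← hPb, ← cfcₙ_sub (f := g) (g := fun t : ℝ => q.eval t) b hgc hg0 (by fun_prop)
      (by simp [← Polynomial.coeff_zero_eq_eval_zero, hqc])]
    refine norm_cfcₙ_le fun x hx => ?_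
    rw [Real.norm_eq_abs, abs_sub_comm]
    exact (hq x (sb hx)).le
  have hfa : ‖cfcₙ f a‖ ≤ Cf := norm_cfcₙ_le fun x hx => hCf x (sa hx)
  have hgb : ‖cfcₙ g b‖ ≤ Cg := norm_cfcₙ_le fun x hx => hCg x (sb hx)
  have hPaN : ‖Pa‖ ≤ Cf + η := by
    calc ‖Pa‖ = ‖cfcₙ f a - (cfcₙ f a - Pa)‖ := by rw [sub_sub_cancel]
      _ ≤ ‖cfcₙ f a‖ + ‖cfcₙ f a - Pa‖ := norm_sub_le _ _
      _ ≤ Cf + η := add_le_add hfa herr_a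
  have hPP : ‖Pa * Pb‖ ≤ Kf * (Kg * ‖a * b‖) := by
    rw [hPadef, hPbdef, Finset.sum_mul_sum]
    refine le_trans (norm_sum_le _ _) (le_trans (Finset.sum_le_sum fun i _ =>
      norm_sum_le _ _) ?_)
    have hterm : ∀ i ∈ Finset.range p.natDegree, ∀ j ∈ Finset.range q.natDegree,
        ‖(p.coeff (i + 1) • mulPow a i) * (q.coeff (j + 1) • mulPow b j)‖
          ≤ (|p.coeff (i + 1)| * M ^ i) * ((|q.coeff (j + 1)| * M ^ j) * ‖a * b‖) := by
      intro i _ j _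
      calc ‖(p.coeff (i + 1) • mulPow a i) * (q.coeff (j + 1) • mulPow b j)‖
          = |p.coeff (i + 1)| * |q.coeff (j + 1)| * ‖mulPow a i * mulPow b j‖ := by
            rw [smul_mul_smul_comm, norm_smul, Real.norm_eq_abs, abs_mul]
        _ ≤ |p.coeff (i + 1)| * |q.coeff (j + 1)| * (‖a‖ ^ i * (‖a * b‖ * ‖b‖ ^ j)) :=
            mul_le_mul_of_nonneg_left (mulPow_mul_mulPow_norm a b i j) (by positivity)
        _ ≤ |p.coeff (i + 1)| * |q.coeff (j + 1)| * (M ^ i * (‖a * b‖ * M ^ j)) := by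
            gcongr <;> first | exact norm_nonneg _ | assumption
        _ = (|p.coeff (i + 1)| * M ^ i) * ((|q.coeff (j + 1)| * M ^ j) * ‖a * b‖) := by ring
    have hKKe : Kf * (Kg * ‖a * b‖) = ∑ i ∈ Finset.range p.natDegree,
        ∑ j ∈ Finset.range q.natDegree,
          (|p.coeff (i + 1)| * M ^ i) * ((|q.coeff (j + 1)| * M ^ j) * ‖a * b‖) := by
      rw [hKfdef, hKgdef, Finset.sum_mul]
      refine Finset.sum_congr rfl fun i _ => ?_
      rw [Finset.sum_mul, Finset.mul_sum]
    rw [hKKe]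
    exact Finset.sum_le_sum fun i hi => Finset.sum_le_sum fun j hj => hterm i hi j hj
  have hstep : cfcₙ f a * cfcₙ g b
      = Pa * Pb + ((cfcₙ f a - Pa) * cfcₙ g b + Pa * (cfcₙ g b - Pb)) := by noncomm_ring
  have hPPδ : Kf * (Kg * ‖a * b‖) < ε / 2 := by
    nlinarith [mul_le_mul_of_nonneg_left hab.le hKK, norm_nonneg (a * b)]
  calc ‖cfcₙ f a * cfcₙ g b‖
      ≤ ‖Pa * Pb‖ + (‖(cfcₙ f a - Pa) * cfcₙ g b‖ + ‖Pa * (cfcₙ g b - Pb)‖) :=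
        le_trans (hstep ▸ norm_add_le _ _) (add_le_add le_rfl (norm_add_le _ _))
    _ ≤ Kf * (Kg * ‖a * b‖) + (η * Cg + (Cf + η) * η) := by
        refine add_le_add hPP (add_le_add ?_ ?_)
        · exact le_trans (norm_mul_le _ _) (mul_le_mul herr_a hgb (norm_nonneg _) hη0.le)
        · exact le_trans (norm_mul_le _ _)
            (mul_le_mul hPaN herr_b (norm_nonneg _) (by positivity))
    _ < ε / 2 + ε / 2 := add_lt_add hPPδ hηsmall
    _ = ε := by ring
end

section
/- Let A be a unital C*-algebra, let a, g ∈ A satisfy 0 ≤ a ≤ 1 and 0 ≤ g ≤ 1, and let ε₁, ε₂ ≥ 0. Then (a − (ε₁ + ε₂))₊ is Cuntz subequivalent in M₂(A) to the diagonal element ((1 − g) a (1 − g) − ε₁)₊ ⊕ (g − ε₂/2)₊; that is, (a − (ε₁ + ε₂))₊ ⊕ 0 ≾ diag( ((1−g)a(1−g) − ε₁)₊ , (g − ε₂/2)₊ ) in M₂(A). -/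
open Filter Topology
open scoped ENNReal

open RC

section CuntzAuxSection
variable {A : Type*} [CStarAlgebra A]

namespace Work

lemma cuntz_of_forall {a b : A} (h : ∀ ε : ℝ, 0 < ε → ∃ v : A, ‖v * b * star v - a‖ < ε) :
    CuntzSubeq a b := by
  choose v hv using fun n : ℕ => h (1 / (n + 1)) (by positivity)
  refine ⟨v, Metric.tendsto_atTop.mpr fun ε hε => ?_⟩
  obtain ⟨N, hN⟩ := exists_nat_one_div_lt hε
  refine ⟨N, fun n hn => ?_⟩
  rw [dist_eq_norm]
  refine (hv n).trans_le ?_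
  refine le_trans ?_ hN.le
  have : (N:ℝ) + 1 ≤ (n:ℝ) + 1 := by exact_mod_cast Nat.succ_le_succ hn
  exact one_div_le_one_div_of_le (by positivity) this

lemma cuntz_forall {a b : A} (h : CuntzSubeq a b) :
    ∀ ε : ℝ, 0 < ε → ∃ v : A, ‖v * b * star v - a‖ < ε := by
  intro ε hε
  obtain ⟨v, hv⟩ := h
  obtain ⟨N, hN⟩ := (Metric.tendsto_atTop.mp hv) ε hε
  exact ⟨v N, by simpa [dist_eq_norm] using hN N le_rfl⟩

lemma cuntz_exact {a b : A} (v : A) (h : a = v * b * star v) : CuntzSubeq a b :=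
  ⟨fun _ => v, h ▸ tendsto_const_nhds⟩

lemma cuntz_trans {a b c : A} (h1 : CuntzSubeq a b) (h2 : CuntzSubeq b c) : CuntzSubeq a c := by
  refine cuntz_of_forall fun ε hε => ?_
  obtain ⟨v, hv⟩ := cuntz_forall h1 (ε/2) (by positivity)
  obtain ⟨w, hw⟩ := cuntz_forall h2 (ε/(2 * (‖v‖*‖v‖+1))) (by positivity)
  refine ⟨v * w, ?_⟩
  have key : v * w * c * star (v * w) - a
      = v * (w * c * star w - b) * star v + (v * b * star v - a) := by
    simp only [star_mul]; noncomm_ring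
  calc ‖v * w * c * star (v * w) - a‖
      ≤ ‖v * (w * c * star w - b) * star v‖ + ‖v * b * star v - a‖ := key ▸ norm_add_le _ _
    _ ≤ ‖v‖ * ‖w * c * star w - b‖ * ‖v‖ + ‖v * b * star v - a‖ := by
        gcongr
        calc ‖v * (w * c * star w - b) * star v‖
            ≤ ‖v * (w * c * star w - b)‖ * ‖star v‖ := norm_mul_le _ _
          _ ≤ ‖v‖ * ‖w * c * star w - b‖ * ‖star v‖ := by gcongr; exact norm_mul_le _ _
          _ = ‖v‖ * ‖w * c * star w - b‖ * ‖v‖ := by rw [norm_star]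
    _ ≤ (‖v‖ * ‖v‖ + 1) * ‖w * c * star w - b‖ + ‖v * b * star v - a‖ := by
        have : ‖v‖ * ‖w * c * star w - b‖ * ‖v‖ = (‖v‖ * ‖v‖) * ‖w * c * star w - b‖ := by ring
        rw [this]
        have h1 := norm_nonneg (w * c * star w - b)
        nlinarith [norm_nonneg v]
    _ < (‖v‖ * ‖v‖ + 1) * (ε/(2 * (‖v‖*‖v‖+1))) + ε/2 := by
        have h0 : (0:ℝ) < ‖v‖ * ‖v‖ + 1 := by positivity
        exact add_lt_add (by exact (mul_lt_mul_iff_right₀ h0).mpr hw) hv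
    _ = ε := by
        have h0 : (‖v‖ * ‖v‖ + 1 : ℝ) ≠ 0 := by positivity
        field_simp
        ring

lemma cuntz_closed {a b : A} (h : ∀ ε : ℝ, 0 < ε → ∃ a' : A, ‖a - a'‖ < ε ∧ CuntzSubeq a' b) :
    CuntzSubeq a b := by
  refine cuntz_of_forall fun ε hε => ?_
  obtain ⟨a', ha', hsub⟩ := h (ε/2) (by positivity)
  obtain ⟨v, hv⟩ := cuntz_forall hsub (ε/2) (by positivity)
  refine ⟨v, ?_⟩
  calc ‖v * b * star v - a‖ ≤ ‖v * b * star v - a'‖ + ‖a' - a‖ := norm_sub_le_norm_sub_add_norm_sub _ _ _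
    _ < ε/2 + ε/2 := by rw [norm_sub_rev a' a]; exact add_lt_add hv ha'
    _ = ε := by ring


noncomputable def sq (x : A) : A := cfc Real.sqrt x

lemma sq_isSA (x : A) : IsSelfAdjoint (sq x) := cfc_predicate _ x

lemma star_sq (x : A) : star (sq x) = sq x := (sq_isSA x).star_eq

lemma sq_mul_self [PartialOrder A] [StarOrderedRing A] {x : A} (hx : 0 ≤ x) :
    sq x * sq x = x := by
  rw [sq, ← cfc_mul Real.sqrt Real.sqrt x Real.continuous_sqrt.continuousOn
      Real.continuous_sqrt.continuousOn]
  have : ∀ t ∈ spectrum ℝ x, Real.sqrt t * Real.sqrt t = id t := fun t ht =>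
    Real.mul_self_sqrt (spectrum_nonneg_of_nonneg hx ht)
  rw [cfc_congr this, cfc_id ℝ x]

section Order
variable [PartialOrder A] [StarOrderedRing A]

lemma sq_nn (x : A) : 0 ≤ sq x := cfc_nonneg (fun t _ => Real.sqrt_nonneg t)

lemma cuntz_of_le {a b : A} (ha : 0 ≤ a) (hab : a ≤ b) : CuntzSubeq a b := by
  rcases subsingleton_or_nontrivial A with hs|hn
  · exact cuntz_exact 1 (Subsingleton.elim _ _)
  have hb : 0 ≤ b := ha.trans hab
  refine cuntz_of_forall fun ε hε => ?_
  set t : ℝ := ε/2 with ht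
  have ht0 : 0 < t := by positivity
  -- F is (max s 0 + t)^{-1/2}
  set F : ℝ → ℝ := fun s => Real.sqrt ((max s 0 + t)⁻¹) with hF
  have hFpos : ∀ s : ℝ, 0 < max s 0 + t := fun s => by positivity
  have hFcont : Continuous F :=
    Real.continuous_sqrt.comp <| ((continuous_id.max continuous_const).add
      continuous_const).inv₀ fun s => (hFpos s).ne'
  set w : A := cfc F b with hw
  have hwsa : star w = w := (cfc_predicate F b).star_eq
  set v : A := sq a * w with hv
  refine ⟨v, ?_⟩
  have hstarv : star v = w * sq a := by rw [hv, star_mul, hwsa, star_sq]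
  -- compute w * b * w
  have hid : Continuous (fun s : ℝ => s) := continuous_id
  have hwbw : w * b * w = cfc (fun s => F s * (s * F s)) b := by
    have e2 : cfc (fun s : ℝ => s * F s) b = cfc (fun s : ℝ => s) b * cfc F b :=
      cfc_mul _ F b hid.continuousOn hFcont.continuousOn
    have e1 : cfc (fun s => F s * (s * F s)) b = cfc F b * cfc (fun s : ℝ => s * F s) b :=
      cfc_mul F _ b hFcont.continuousOn (hid.mul hFcont).continuousOn
    rw [e1, e2, cfc_id' ℝ b hb.isSelfAdjoint, hw, mul_assoc]
  -- the error term
  have key : v * b * star v = sq a * (cfc (fun s => F s * (s * F s)) b) * sq a := by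
    rw [hv, hstarv, ← hwbw]; noncomm_ring
  set ψ : ℝ → ℝ := fun s => 1 - F s * (s * F s) with hψ
  have hψcont : Continuous ψ := continuous_const.sub (hFcont.mul (continuous_id.mul hFcont))
  have hψval : ∀ s : ℝ, 0 ≤ s → ψ s = t / (s + t) := by
    intro s hs
    have h1 : max s 0 = s := max_eq_left hs
    have h2 : (0:ℝ) < s + t := by positivity
    have h3 : F s * F s = (s + t)⁻¹ := by
      rw [hF]; dsimp only; rw [h1, Real.mul_self_sqrt (by positivity)]
    rw [hψ]; dsimp only
    rw [show F s * (s * F s) = (F s * F s) * s by ring, h3]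
    field_simp
    ring
  have herr : a - v * b * star v = sq a * cfc ψ b * sq a := by
    rw [key, hψ]
    have : cfc (fun s => (1:ℝ) - F s * (s * F s)) b
        = 1 - cfc (fun s => F s * (s * F s)) b := by
      rw [cfc_sub (fun _ => (1:ℝ)) (fun s => F s * (s * F s)) b (continuousOn_const)
        ((hFcont.mul (continuous_id.mul hFcont)).continuousOn), cfc_const_one ℝ b hb.isSelfAdjoint]
    rw [this]
    have haa : sq a * sq a = a := sq_mul_self ha
    rw [mul_sub, sub_mul, mul_one, haa]
  -- now bound the norm
  set c : A := cfc ψ b with hc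
  have hcnn : 0 ≤ c := cfc_nonneg fun s hs => by
    have hs0 := spectrum_nonneg_of_nonneg hb hs
    rw [hψval s hs0]
    exact div_nonneg ht0.le (by linarith)
  set sc : A := sq c with hsc
  have hx : sq a * c * sq a = star (sc * sq a) * (sc * sq a) := by
    rw [star_mul, star_sq, star_sq, hsc]
    have : sq c * sq c = c := sq_mul_self hcnn
    rw [show sq a * sq c * (sq c * sq a) = sq a * (sq c * sq c) * sq a by noncomm_ring, this]
  have hy : (sc * sq a) * star (sc * sq a) = sc * a * sc := by
    rw [star_mul, star_sq, star_sq]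
    have haa : sq a * sq a = a := sq_mul_self ha
    rw [show sq c * sq a * (sq a * sq c) = sq c * (sq a * sq a) * sq c by noncomm_ring, haa, hsc]
  have hnorm1 : ‖sq a * c * sq a‖ = ‖sc * a * sc‖ := by
    rw [hx, ← hy, CStarRing.norm_star_mul_self, CStarRing.norm_self_mul_star]
  have hle1 : sc * a * sc ≤ sc * b * sc := by
    have := star_left_conjugate_le_conjugate hab sc
    rwa [star_sq] at this
  have hnn1 : 0 ≤ sc * a * sc := by
    have := star_left_conjugate_nonneg ha sc
    rwa [star_sq] at this
  have hnorm2 : ‖sc * a * sc‖ ≤ ‖sc * b * sc‖ :=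
    CStarAlgebra.norm_le_norm_of_nonneg_of_le hnn1 hle1
  -- sc * b * sc = cfc of ψ * id, with sup ≤ t
  have hsψcont : Continuous (fun s => Real.sqrt (ψ s)) := Real.continuous_sqrt.comp hψcont
  have hsbs : sc * b * sc = cfc (fun s => Real.sqrt (ψ s) * (s * Real.sqrt (ψ s))) b := by
    have e4 : cfc (fun s => Real.sqrt (ψ s)) b = sc := by
      rw [cfc_comp' Real.sqrt ψ b Real.continuous_sqrt.continuousOn hψcont.continuousOn hb.isSelfAdjoint,
        hsc, sq, hc]
    have e2 : cfc (fun s : ℝ => s * Real.sqrt (ψ s)) b = cfc (fun s : ℝ => s) b * cfc (fun s => Real.sqrt (ψ s)) b :=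
      cfc_mul _ _ b hid.continuousOn hsψcont.continuousOn
    have e1 : cfc (fun s => Real.sqrt (ψ s) * (s * Real.sqrt (ψ s))) b
        = cfc (fun s => Real.sqrt (ψ s)) b * cfc (fun s : ℝ => s * Real.sqrt (ψ s)) b :=
      cfc_mul _ _ b hsψcont.continuousOn (hid.mul hsψcont).continuousOn
    rw [e1, e2, cfc_id' ℝ b hb.isSelfAdjoint, e4, mul_assoc]
  have hnorm3 : ‖sc * b * sc‖ ≤ t := by
    rw [hsbs]
    refine norm_cfc_le ht0.le fun s hs => ?_
    have hs0 : 0 ≤ s := spectrum_nonneg_of_nonneg hb hs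
    have hψs : ψ s = t / (s + t) := hψval s hs0
    have hψnn : 0 ≤ ψ s := by rw [hψs]; positivity
    have : Real.sqrt (ψ s) * (s * Real.sqrt (ψ s)) = ψ s * s := by
      rw [show Real.sqrt (ψ s) * (s * Real.sqrt (ψ s))
          = (Real.sqrt (ψ s) * Real.sqrt (ψ s)) * s by ring, Real.mul_self_sqrt hψnn]
    rw [this, hψs]
    have h2 : (0:ℝ) < s + t := by positivity
    rw [Real.norm_of_nonneg (by positivity)]
    rw [div_mul_eq_mul_div, div_le_iff₀ h2]
    nlinarith
  have : ‖a - v * b * star v‖ ≤ t := by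
    rw [herr]
    calc ‖sq a * c * sq a‖ = ‖sc * a * sc‖ := hnorm1
      _ ≤ ‖sc * b * sc‖ := hnorm2
      _ ≤ t := hnorm3
  rw [norm_sub_rev] at this
  exact lt_of_le_of_lt this (by rw [ht]; linarith)


noncomputable def pCut (ε : ℝ) (x : A) : A := cfc (fun t : ℝ => max (t - ε) 0) x

lemma contCut (ε : ℝ) : Continuous (fun t : ℝ => max (t - ε) 0) :=
  (continuous_id.sub continuous_const).max continuous_const

lemma pCut_nonneg (ε : ℝ) (x : A) : 0 ≤ pCut ε x :=
  cfc_nonneg fun t _ => le_max_right _ _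

lemma sub_smul_le_pCut (σ : ℝ) {x : A} (hx : IsSelfAdjoint x) :
    x - σ • 1 ≤ pCut σ x := by
  have h1 : x - σ • (1:A) = cfc (fun t : ℝ => t - σ) x := by
    rw [cfc_sub (fun t : ℝ => t) (fun _ => σ) x continuous_id.continuousOn
      continuousOn_const, cfc_id' ℝ x hx, cfc_const σ x hx, Algebra.algebraMap_eq_smul_one]
  rw [h1, pCut]
  exact cfc_mono fun t _ => le_max_left _ _

lemma norm_pCut_sub (σ δ : ℝ) (hδ : 0 ≤ δ) {x : A} (hx : IsSelfAdjoint x) :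
    ‖pCut σ x - pCut (σ + δ) x‖ ≤ δ := by
  rcases subsingleton_or_nontrivial A with hs|hn
  · simp [Subsingleton.elim (pCut σ x - pCut (σ + δ) x) 0, hδ]
  rw [pCut, pCut, ← cfc_sub (fun t : ℝ => max (t - σ) 0) (fun t : ℝ => max (t - (σ+δ)) 0) x
    (contCut σ).continuousOn (contCut (σ+δ)).continuousOn]
  refine norm_cfc_le hδ fun t _ => ?_
  have := abs_max_sub_max_le_abs (t - σ) (t - (σ + δ)) 0
  rw [Real.norm_eq_abs]
  refine this.trans ?_
  rw [show t - σ - (t - (σ + δ)) = δ by ring, abs_of_nonneg hδ]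

lemma cuntz_pCut_le {x z : A} (σ : ℝ) (hx : IsSelfAdjoint x) (hz : 0 ≤ z)
    (hle : x - σ • 1 ≤ z) : CuntzSubeq (pCut σ x) z := by
  rcases subsingleton_or_nontrivial A with hs|hn
  · exact cuntz_exact 1 (Subsingleton.elim _ _)
  refine cuntz_closed fun ε hε => ?_
  set δ : ℝ := ε/2 with hδdef
  have hδ : 0 < δ := by positivity
  refine ⟨pCut (σ + δ) x, lt_of_le_of_lt (norm_pCut_sub σ δ hδ.le hx) (by linarith), ?_⟩
  set f : ℝ → ℝ := fun t => Real.sqrt (max (t - (σ+δ)) 0 / max (t - σ) δ) with hf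
  have hdenom : ∀ t : ℝ, 0 < max (t - σ) δ := fun t => lt_of_lt_of_le hδ (le_max_right _ _)
  have hfcont : Continuous f := Real.continuous_sqrt.comp <|
    (contCut (σ+δ)).div ((continuous_id.sub continuous_const).max continuous_const)
      fun t => (hdenom t).ne'
  set w : A := cfc f x with hw
  have hwsa : star w = w := (cfc_predicate f x).star_eq
  have hxσ : x - σ • (1:A) = cfc (fun t : ℝ => t - σ) x := by
    rw [cfc_sub (fun t : ℝ => t) (fun _ => σ) x continuous_id.continuousOn
      continuousOn_const, cfc_id' ℝ x hx, cfc_const σ x hx, Algebra.algebraMap_eq_smul_one]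
  have hgcont : Continuous (fun t : ℝ => t - σ) := continuous_id.sub continuous_const
  have h1 : w * (x - σ • 1) * w = cfc (fun t => f t * ((t - σ) * f t)) x := by
    have e2 : cfc (fun t : ℝ => (t - σ) * f t) x = cfc (fun t : ℝ => t - σ) x * cfc f x :=
      cfc_mul _ f x hgcont.continuousOn hfcont.continuousOn
    have e1 : cfc (fun t => f t * ((t - σ) * f t)) x
        = cfc f x * cfc (fun t : ℝ => (t - σ) * f t) x :=
      cfc_mul f _ x hfcont.continuousOn (hgcont.mul hfcont).continuousOn
    rw [e1, e2, hxσ, hw, mul_assoc]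
  have hptwise : (fun t => f t * ((t - σ) * f t)) = fun t : ℝ => max (t - (σ+δ)) 0 := by
    funext t
    have hnum : 0 ≤ max (t - (σ+δ)) 0 := le_max_right _ _
    have hsq : f t * f t = max (t - (σ+δ)) 0 / max (t - σ) δ := by
      rw [hf]
      exact Real.mul_self_sqrt (div_nonneg hnum (hdenom t).le)
    have : f t * ((t - σ) * f t) = (f t * f t) * (t - σ) := by ring
    rw [this, hsq]
    rcases le_or_gt δ (t - σ) with h|h
    · rw [max_eq_left h, div_mul_cancel₀]
      exact ne_of_gt (lt_of_lt_of_le hδ h)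
    · have h2 : t - (σ + δ) < 0 := by linarith
      rw [max_eq_right h2.le, zero_div, zero_mul]
  have h2 : pCut (σ + δ) x = w * (x - σ • 1) * w := by rw [h1, hptwise]; rfl
  have h3 : w * (x - σ • 1) * w ≤ w * z * w := by
    have := star_left_conjugate_le_conjugate hle w
    rwa [hwsa] at this
  have h4 : CuntzSubeq (pCut (σ + δ) x) (w * z * w) :=
    cuntz_of_le (pCut_nonneg _ _) (h2 ▸ h3)
  have h5 : CuntzSubeq (w * z * w) z := cuntz_exact w (by rw [hwsa])
  exact cuntz_trans h4 h5

lemma cuntz_pCut_mono {x y : A} (σ : ℝ) (hx : 0 ≤ x) (hy : 0 ≤ y) (hxy : x ≤ y) :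
    CuntzSubeq (pCut σ x) (pCut σ y) :=
  cuntz_pCut_le σ hx.isSelfAdjoint (pCut_nonneg _ _)
    (le_trans (sub_le_sub_right hxy _) (sub_smul_le_pCut σ hy.isSelfAdjoint))


omit [PartialOrder A] [StarOrderedRing A] in
lemma upow (u : A) : ∀ n : ℕ, u * (star u * u) ^ n = (u * star u) ^ n * u := by
  intro n
  induction n with
  | zero => simp
  | succ n ih =>
    rw [pow_succ, pow_succ, ← mul_assoc, ih]
    noncomm_ring

omit [PartialOrder A] [StarOrderedRing A] in
lemma upoly (u : A) (p : Polynomial ℝ) :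
    u * (Polynomial.aeval (star u * u) p) = (Polynomial.aeval (u * star u) p) * u := by
  induction p using Polynomial.induction_on' with
  | add p q hp hq => rw [map_add, map_add, mul_add, add_mul, hp, hq]
  | monomial n r =>
    rw [Polynomial.aeval_monomial, Polynomial.aeval_monomial]
    calc u * (algebraMap ℝ A r * (star u * u) ^ n)
        = (u * algebraMap ℝ A r) * (star u * u) ^ n := by rw [mul_assoc]
      _ = (algebraMap ℝ A r * u) * (star u * u) ^ n := by rw [← Algebra.commutes]
      _ = algebraMap ℝ A r * (u * (star u * u) ^ n) := by rw [mul_assoc]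
      _ = algebraMap ℝ A r * ((u * star u) ^ n * u) := by rw [upow]
      _ = algebraMap ℝ A r * (u * star u) ^ n * u := by rw [mul_assoc]

lemma spectrum_sub_Icc {x : A} (hx : 0 ≤ x) [Nontrivial A] :
    spectrum ℝ x ⊆ Set.Icc 0 ‖x‖ := by
  intro s hs
  have h1 : 0 ≤ s := spectrum_nonneg_of_nonneg hx hs
  have h2 := spectrum.norm_le_norm_of_mem hs
  rw [Real.norm_eq_abs, abs_of_nonneg h1] at h2
  exact ⟨h1, h2⟩

lemma intertwine (u : A) {f : ℝ → ℝ} (hf : Continuous f) :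
    u * cfc f (star u * u) = cfc f (u * star u) * u := by
  rcases subsingleton_or_nontrivial A with hs|hn
  · exact Subsingleton.elim _ _
  set c := star u * u with hcdef
  set d := u * star u with hddef
  have hc : 0 ≤ c := star_mul_self_nonneg u
  have hd : 0 ≤ d := mul_star_self_nonneg u
  set R : ℝ := max ‖c‖ ‖d‖ with hR
  have hcS : spectrum ℝ c ⊆ Set.Icc 0 R :=
    (spectrum_sub_Icc hc).trans (Set.Icc_subset_Icc le_rfl (le_max_left _ _))
  have hdS : spectrum ℝ d ⊆ Set.Icc 0 R :=
    (spectrum_sub_Icc hd).trans (Set.Icc_subset_Icc le_rfl (le_max_right _ _))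
  rw [← sub_eq_zero, ← norm_le_zero_iff]
  refine le_of_forall_pos_le_add fun η hη => ?_
  rw [zero_add]
  set η' : ℝ := η / (2 * (‖u‖ + 1)) with hη'
  have hη'0 : 0 < η' := by positivity
  obtain ⟨p, hp⟩ := exists_polynomial_near_of_continuousOn 0 R f
    (hf.continuousOn) η' hη'0
  have hbc : ‖cfc f c - cfc p.eval c‖ ≤ η' := by
    rw [← cfc_sub f p.eval c hf.continuousOn (p.continuous_aeval).continuousOn]
    refine norm_cfc_le hη'0.le fun s hs => ?_
    have := hp s (hcS hs)
    rw [Real.norm_eq_abs, abs_sub_comm]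
    exact this.le
  have hbd : ‖cfc p.eval d - cfc f d‖ ≤ η' := by
    rw [← cfc_sub p.eval f d (p.continuous_aeval).continuousOn hf.continuousOn]
    refine norm_cfc_le hη'0.le fun s hs => ?_
    exact (hp s (hdS hs)).le.trans_eq' (by rw [Real.norm_eq_abs])
  have hzero : u * cfc p.eval c - cfc p.eval d * u = 0 := by
    rw [cfc_polynomial p c hc.isSelfAdjoint, cfc_polynomial p d hd.isSelfAdjoint,
      upoly u p, sub_self]
  have hsplit : u * cfc f c - cfc f d * u
      = u * (cfc f c - cfc p.eval c) + (cfc p.eval d - cfc f d) * u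
        + (u * cfc p.eval c - cfc p.eval d * u) := by noncomm_ring
  rw [hsplit, hzero, add_zero]
  calc ‖u * (cfc f c - cfc p.eval c) + (cfc p.eval d - cfc f d) * u‖
      ≤ ‖u * (cfc f c - cfc p.eval c)‖ + ‖(cfc p.eval d - cfc f d) * u‖ := norm_add_le _ _
    _ ≤ ‖u‖ * η' + η' * ‖u‖ := by
        refine add_le_add ((norm_mul_le _ _).trans ?_) ((norm_mul_le _ _).trans ?_)
        · exact mul_le_mul_of_nonneg_left hbc (norm_nonneg u)
        · exact mul_le_mul_of_nonneg_right hbd (norm_nonneg u)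
    _ ≤ η := by
        rw [hη']
        have h1 : (0:ℝ) < ‖u‖ + 1 := by positivity
        rw [div_eq_mul_inv]
        have : ‖u‖ * (η * (2 * (‖u‖ + 1))⁻¹) + η * (2 * (‖u‖ + 1))⁻¹ * ‖u‖
            = (2 * ‖u‖) * (η * (2 * (‖u‖ + 1))⁻¹) := by ring
        rw [this]
        rw [show (2:ℝ) * ‖u‖ * (η * (2 * (‖u‖ + 1))⁻¹) = η * ((2 * ‖u‖) / (2 * (‖u‖+1))) by ring]
        have hfrac : (2 * ‖u‖) / (2 * (‖u‖+1)) ≤ 1 := by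
          rw [div_le_one (by positivity)]; linarith
        nlinarith

lemma cuntz_flip (u : A) {ε : ℝ} (hε : 0 ≤ ε) :
    CuntzSubeq (pCut ε (star u * u)) (pCut ε (u * star u)) := by
  rcases subsingleton_or_nontrivial A with hs|hn
  · exact cuntz_exact 1 (Subsingleton.elim _ _)
  refine cuntz_of_forall fun ε' hε' => ?_
  set t : ℝ := ε'/2 with htdef
  have ht : 0 < t := by positivity
  set c := star u * u with hcdef
  set d := u * star u with hddef
  have hc : 0 ≤ c := star_mul_self_nonneg u
  set F : ℝ → ℝ := fun t : ℝ => max (t - ε) 0 with hFdef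
  have hFcont : Continuous F := contCut ε
  set s : ℝ → ℝ := fun r => Real.sqrt ((max r t)⁻¹) with hsdef
  have hdenom : ∀ r : ℝ, 0 < max r t := fun r => lt_of_lt_of_le ht (le_max_right _ _)
  have hscont : Continuous s := Real.continuous_sqrt.comp <|
    (continuous_id.max continuous_const).inv₀ fun r => (hdenom r).ne'
  set v : A := cfc s c * star u with hv
  have hssa : star (cfc s c) = cfc s c := (cfc_predicate s c).star_eq
  have hstarv : star v = u * cfc s c := by rw [hv, star_mul, star_star, hssa]
  refine ⟨v, ?_⟩
  have hint : star u * cfc F d = cfc F c * star u := by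
    have := intertwine (star u) hFcont
    simpa [star_star] using this
  have hmid : v * pCut ε d * star v = cfc s c * (cfc F c * c) * cfc s c := by
    rw [hv, hstarv]
    have hd0 : pCut ε d = cfc F d := by rw [pCut, hFdef]
    calc cfc s c * star u * pCut ε d * (u * cfc s c)
        = cfc s c * ((star u * cfc F d) * u) * cfc s c := by rw [hd0]; noncomm_ring
      _ = cfc s c * ((cfc F c * star u) * u) * cfc s c := by rw [hint]
      _ = cfc s c * (cfc F c * (star u * u)) * cfc s c := by noncomm_ring
      _ = cfc s c * (cfc F c * c) * cfc s c := by rw [← hcdef]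
  have hGcont : Continuous (fun r : ℝ => F r * r) := hFcont.mul continuous_id
  have hexp : cfc s c * (cfc F c * c) * cfc s c = cfc (fun r => s r * (F r * r * s r)) c := by
    have e0 : cfc (fun r : ℝ => F r * r) c = cfc F c * c := by
      have := cfc_mul F (fun r : ℝ => r) c hFcont.continuousOn continuous_id.continuousOn
      rw [this, cfc_id' ℝ c hc.isSelfAdjoint]
    have e2 : cfc (fun r : ℝ => F r * r * s r) c = cfc (fun r : ℝ => F r * r) c * cfc s c :=
      cfc_mul _ s c hGcont.continuousOn hscont.continuousOn
    have e1 : cfc (fun r => s r * (F r * r * s r)) c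
        = cfc s c * cfc (fun r : ℝ => F r * r * s r) c :=
      cfc_mul s _ c hscont.continuousOn (hGcont.mul hscont).continuousOn
    rw [e1, e2, e0, mul_assoc]
  have herr : ‖pCut ε c - v * pCut ε d * star v‖ ≤ t := by
    have hpc : pCut ε c = cfc F c := by rw [pCut, hFdef]
    rw [hmid, hexp, hpc, ← cfc_sub F (fun r => s r * (F r * r * s r)) c hFcont.continuousOn
      ((hscont.mul (hGcont.mul hscont)).continuousOn)]
    refine norm_cfc_le ht.le fun r hr => ?_
    have hr0 : 0 ≤ r := spectrum_nonneg_of_nonneg hc hr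
    have hss : s r * s r = (max r t)⁻¹ := Real.mul_self_sqrt (by positivity)
    have hrw : s r * (F r * r * s r) = (max r t)⁻¹ * (F r * r) := by
      rw [← hss]; ring
    rw [hrw, Real.norm_eq_abs]
    have hFr0 : 0 ≤ F r := le_max_right _ _
    have hFrr : F r ≤ r := by
      rw [hFdef]; dsimp only
      rcases max_cases (r - ε) 0 with ⟨heq, _⟩|⟨heq, _⟩ <;> rw [heq] <;> linarith
    rcases le_or_gt t r with h|h
    · rw [max_eq_left h]
      have hrpos : 0 < r := lt_of_lt_of_le ht h
      rw [show r⁻¹ * (F r * r) = F r * (r * r⁻¹) by ring, mul_inv_cancel₀ hrpos.ne',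
        mul_one, sub_self, abs_zero]
      exact ht.le
    · rw [max_eq_right h.le]
      have h1 : 0 ≤ t⁻¹ * (F r * r) := by positivity
      have h2 : t⁻¹ * (F r * r) ≤ F r := by
        rcases eq_or_lt_of_le hFr0 with heq|hlt
        · rw [← heq]; simp
        · have : r * t⁻¹ ≤ 1 := by
            rw [← div_eq_mul_inv, div_le_one ht]; exact h.le
          calc t⁻¹ * (F r * r) = F r * (r * t⁻¹) := by ring
            _ ≤ F r * 1 := by exact mul_le_mul_of_nonneg_left this hFr0
            _ = F r := mul_one _
      rw [abs_of_nonneg (by linarith)]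
      calc F r - t⁻¹ * (F r * r) ≤ F r := by linarith
        _ ≤ r := hFrr
        _ ≤ t := h.le
  rw [norm_sub_rev] at herr
  exact lt_of_le_of_lt herr (by rw [htdef]; linarith)


lemma pCut_two_smul (ε : ℝ) {g : A} (hg : 0 ≤ g) :
    pCut ε ((2:ℝ) • g) = (2:ℝ) • pCut (ε/2) g := by
  have h2g : (2:ℝ) • g = cfc (fun t : ℝ => 2 * t) g :=
    (cfc_const_mul_id 2 g hg.isSelfAdjoint).symm
  have hf2 : Continuous (fun t : ℝ => 2 * t) := continuous_const.mul continuous_id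
  have step1 : pCut ε ((2:ℝ) • g)
      = cfc ((fun t : ℝ => max (t - ε) 0) ∘ (fun t : ℝ => 2 * t)) g := by
    rw [pCut, h2g, ← cfc_comp (fun t : ℝ => max (t - ε) 0) (fun t : ℝ => 2 * t) g
      hg.isSelfAdjoint ((contCut ε).continuousOn) hf2.continuousOn]
  have step2 : ((fun t : ℝ => max (t - ε) 0) ∘ (fun t : ℝ => 2 * t))
      = fun t : ℝ => 2 * max (t - ε/2) 0 := by
    funext t
    simp only [Function.comp_apply]
    rw [show (2:ℝ) * t - ε = 2 * (t - ε/2) by ring]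
    rcases le_total (t - ε/2) 0 with h|h
    · rw [max_eq_right h, max_eq_right (by linarith), mul_zero]
    · rw [max_eq_left h, max_eq_left (by linarith)]
  rw [step1, step2, cfc_const_mul 2 (fun t : ℝ => max (t - ε/2) 0) g
    ((contCut (ε/2)).continuousOn), pCut]

lemma cuntz_two_smul (d : A) : CuntzSubeq ((2:ℝ) • d) d := by
  refine cuntz_exact ((Real.sqrt 2 : ℝ) • (1:A)) ?_
  have hst : star ((Real.sqrt 2 : ℝ) • (1:A)) = (Real.sqrt 2 : ℝ) • (1:A) := by
    rw [star_smul, star_one, star_trivial]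
  rw [hst, smul_mul_assoc, one_mul, mul_smul_comm, smul_mul_assoc, mul_one, smul_smul,
    Real.mul_self_sqrt (by norm_num)]

lemma diag_claim {p e f c d : A} (h1 : CuntzSubeq p (e + f)) (h2 : CuntzSubeq e c)
    (h3 : CuntzSubeq f d) :
    ∀ ε : ℝ, 0 < ε → ∃ U W : A, ‖U * c * star U + W * d * star W - p‖ < ε := by
  intro ε hε
  obtain ⟨v, hv⟩ := cuntz_forall h1 (ε/2) (by positivity)
  set η : ℝ := ε/(4*(‖v‖*‖v‖+1)) with hη
  have hη0 : 0 < η := by positivity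
  obtain ⟨r, hr⟩ := cuntz_forall h2 η hη0
  obtain ⟨w, hw⟩ := cuntz_forall h3 η hη0
  refine ⟨v * r, v * w, ?_⟩
  have key : (v*r) * c * star (v*r) + (v*w) * d * star (v*w) - p
      = v * (r * c * star r - e) * star v + v * (w * d * star w - f) * star v
        + (v * (e + f) * star v - p) := by
    simp only [star_mul]; noncomm_ring
  have hconj : ∀ X : A, ‖v * X * star v‖ ≤ (‖v‖*‖v‖+1) * ‖X‖ := by
    intro X
    calc ‖v * X * star v‖ ≤ ‖v * X‖ * ‖star v‖ := norm_mul_le _ _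
      _ ≤ ‖v‖ * ‖X‖ * ‖star v‖ := by gcongr; exact norm_mul_le _ _
      _ = ‖v‖ * ‖v‖ * ‖X‖ := by rw [norm_star]; ring
      _ ≤ (‖v‖*‖v‖+1) * ‖X‖ := by nlinarith [norm_nonneg X]
  have hquarter : (‖v‖*‖v‖+1) * η = ε/4 := by
    rw [hη]; field_simp
  calc ‖(v*r) * c * star (v*r) + (v*w) * d * star (v*w) - p‖
      ≤ ‖v * (r * c * star r - e) * star v‖ + ‖v * (w * d * star w - f) * star v‖
        + ‖v * (e + f) * star v - p‖ := by
        rw [key]; exact (norm_add_le _ _).trans (by gcongr; exact norm_add_le _ _)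
    _ < (‖v‖*‖v‖+1) * η + (‖v‖*‖v‖+1) * η + ε/2 := by
        have b1 := (hconj (r * c * star r - e)).trans
          (mul_le_mul_of_nonneg_left hr.le (by positivity))
        have b2 := (hconj (w * d * star w - f)).trans
          (mul_le_mul_of_nonneg_left hw.le (by positivity))
        have hlt : (0:ℝ) < (‖v‖*‖v‖+1) * η := by positivity
        -- we need strict overall; the last term is strict
        have := add_lt_add_of_le_of_lt (add_le_add b1 b2) hv
        linarith
    _ = ε := by rw [hquarter]; ring

end Order

section Mat
variable [PartialOrder A] [StarOrderedRing A]

lemma mat_tendsto {fM : ℕ → Matrix (Fin 2) (Fin 2) A} {L : Matrix (Fin 2) (Fin 2) A}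
    (h : ∀ i j, Tendsto (fun n => fM n i j) atTop (𝓝 (L i j))) :
    Tendsto fM atTop (𝓝 L) :=
  tendsto_pi_nhds.mpr fun i => tendsto_pi_nhds.mpr fun j => h i j

lemma cuntz_diag {p e f c d : A} (h1 : CuntzSubeq p (e + f)) (h2 : CuntzSubeq e c)
    (h3 : CuntzSubeq f d) :
    CuntzSubeq (Matrix.diagonal ![p, 0]) (Matrix.diagonal ![c, d]) := by
  choose U W hUW using fun n : ℕ =>
    diag_claim h1 h2 h3 (1/(n+1)) (by positivity)
  refine ⟨fun n => Matrix.of ![![U n, W n], ![0, 0]], ?_⟩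
  have hprod : ∀ n, (Matrix.of ![![U n, W n], ![0, 0]]) * Matrix.diagonal ![c, d]
      * star (Matrix.of ![![U n, W n], ![0, 0]])
      = Matrix.of ![![U n * c * star (U n) + W n * d * star (W n), 0], ![0, 0]] := by
    intro n
    ext i j
    fin_cases i <;> fin_cases j <;>
      simp +decide [Matrix.mul_apply, Fin.sum_univ_two, Matrix.star_apply, Matrix.diagonal_apply,
        Matrix.vecMul, Matrix.vecHead, Matrix.vecTail, dotProduct]
  simp only [hprod]
  refine mat_tendsto fun i j => ?_
  fin_cases i <;> fin_cases j <;>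
    simp only [Matrix.of_apply, Matrix.cons_val', Matrix.cons_val_zero, Matrix.cons_val_one,
      Matrix.head_cons, Matrix.empty_val', Matrix.cons_val_fin_one, Matrix.head_fin_const,
      Matrix.diagonal_apply_eq, Matrix.diagonal_apply_ne, Matrix.diagonal]
  case _ =>
    -- (0,0) entry
    rw [tendsto_iff_norm_sub_tendsto_zero]
    refine squeeze_zero (fun n => norm_nonneg _) (fun n => (hUW n).le) ?_
    exact tendsto_one_div_add_atTop_nhds_zero_nat
  all_goals
    first
      | exact tendsto_const_nhds
      | (convert tendsto_const_nhds <;> simp)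

end Mat



section Main
variable [PartialOrder A] [StarOrderedRing A]

theorem main (a g : A) (ha0 : 0 ≤ a) (ha1 : a ≤ 1) (hg0 : 0 ≤ g) (hg1 : g ≤ 1)
    (ε₁ ε₂ : ℝ) (hε₁ : 0 ≤ ε₁) (hε₂ : 0 ≤ ε₂) :
    CuntzSubeq (Matrix.diagonal ![pCut (ε₁ + ε₂) a, 0])
      (Matrix.diagonal ![pCut ε₁ ((1 - g) * a * (1 - g)), pCut (ε₂ / 2) g]) := by
  have hone : (0:A) ≤ 1 := by simpa using star_mul_self_nonneg (1:A)
  set sa : A := sq a with hsadef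
  have hsa2 : sa * sa = a := sq_mul_self ha0
  have hsast : star sa = sa := star_sq a
  have hgst : star g = g := hg0.isSelfAdjoint.star_eq
  have hhst : star (1 - g) = 1 - g := by rw [star_sub, star_one, hgst]
  -- the element m = 2g - g²
  set m : A := (2:ℝ) • g - g * g with hmdef
  set w : A := sq g with hwdef
  have hw2 : w * w = g := sq_mul_self hg0
  have hwst : star w = w := star_sq g
  have hwgw : w * g * w = g * g := by
    have hidc : Continuous (fun t : ℝ => t) := continuous_id
    have e1 : cfc (fun t : ℝ => Real.sqrt t * (t * Real.sqrt t)) g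
        = cfc Real.sqrt g * cfc (fun t : ℝ => t * Real.sqrt t) g :=
      cfc_mul _ _ g Real.continuous_sqrt.continuousOn (hidc.mul Real.continuous_sqrt).continuousOn
    have e2 : cfc (fun t : ℝ => t * Real.sqrt t) g
        = cfc (fun t : ℝ => t) g * cfc Real.sqrt g :=
      cfc_mul _ _ g hidc.continuousOn Real.continuous_sqrt.continuousOn
    have e3 : cfc (fun t : ℝ => Real.sqrt t * (t * Real.sqrt t)) g
        = cfc (fun t : ℝ => t * t) g := by
      refine cfc_congr fun t ht => ?_
      have ht0 : 0 ≤ t := spectrum_nonneg_of_nonneg hg0 ht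
      rw [show Real.sqrt t * (t * Real.sqrt t) = (Real.sqrt t * Real.sqrt t) * t by ring,
        Real.mul_self_sqrt ht0]
    have e4 : cfc (fun t : ℝ => t * t) g = g * g := by
      rw [cfc_mul (fun t : ℝ => t) (fun t : ℝ => t) g hidc.continuousOn hidc.continuousOn,
        cfc_id' ℝ g hg0.isSelfAdjoint]
    calc w * g * w = w * (g * w) := by rw [mul_assoc]
      _ = cfc Real.sqrt g * cfc (fun t : ℝ => t * Real.sqrt t) g := by
          rw [hwdef, sq]
          congr 1
          rw [e2, cfc_id' ℝ g hg0.isSelfAdjoint]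
      _ = g * g := by rw [← e1, e3, e4]
  have hmconj : m = w * ((2:ℝ) • 1 - g) * w := by
    rw [mul_sub, sub_mul, hwgw, mul_smul_comm, smul_mul_assoc, mul_one, hw2, hmdef]
  have hm0 : 0 ≤ m := by
    rw [hmconj]
    have h2 : (0:A) ≤ (2:ℝ) • 1 - g := by
      rw [sub_nonneg]
      calc g ≤ 1 := hg1
        _ ≤ (2:ℝ) • 1 := by
            rw [show ((2:ℝ) • (1:A)) = 1 + 1 by rw [two_smul]]
            exact le_add_of_nonneg_left hone
    calc (0:A) ≤ star w * ((2:ℝ) • 1 - g) * w := star_left_conjugate_nonneg h2 w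
      _ = w * ((2:ℝ) • 1 - g) * w := by rw [hwst]
  set q : A := sq m with hqdef
  have hq2 : q * q = m := sq_mul_self hm0
  have hqst : star q = q := star_sq m
  -- v and u
  set v : A := (1 - g) * sa with hvdef
  set u : A := q * sa with hudef
  have hvst : star v = sa * (1 - g) := by rw [hvdef, star_mul, hsast, hhst]
  have hust : star u = sa * q := by rw [hudef, star_mul, hsast, hqst]
  have hvv : v * star v = (1 - g) * a * (1 - g) := by
    rw [hvdef, hvst, ← hsa2]; noncomm_ring
  have huu : u * star u = q * a * q := by
    rw [hudef, hust, ← hsa2]; noncomm_ring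
  have hx : star v * v = sa * ((1-g) * (1-g)) * sa := by
    rw [hvdef, hvst]; noncomm_ring
  have hy : star u * u = sa * m * sa := by
    rw [hudef, hust, ← hq2]; noncomm_ring
  have hxy : star v * v + star u * u = a := by
    rw [hx, hy]
    have hsum : (1-g) * (1-g) + m = 1 := by
      rw [hmdef, show ((2:ℝ) • g) = g + g from two_smul ℝ g]
      noncomm_ring
    calc sa * ((1-g) * (1-g)) * sa + sa * m * sa = sa * ((1-g)*(1-g) + m) * sa := by
          noncomm_ring
      _ = a := by rw [hsum, mul_one, hsa2]
  -- step 1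
  have hvv0 : (0:A) ≤ star v * v := star_mul_self_nonneg v
  have huu0 : (0:A) ≤ star u * u := star_mul_self_nonneg u
  have step1 : CuntzSubeq (pCut (ε₁ + ε₂) a) (pCut ε₁ (star v * v) + pCut ε₂ (star u * u)) := by
    refine cuntz_pCut_le (ε₁ + ε₂) ha0.isSelfAdjoint
      (add_nonneg (pCut_nonneg _ _) (pCut_nonneg _ _)) ?_
    have hd : a - (ε₁ + ε₂) • (1:A) = (star v * v - ε₁ • 1) + (star u * u - ε₂ • 1) := by
      rw [← hxy, add_smul]; abel
    rw [hd]
    exact add_le_add (sub_smul_le_pCut ε₁ hvv0.isSelfAdjoint)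
      (sub_smul_le_pCut ε₂ huu0.isSelfAdjoint)
  -- step 2
  have step2 : CuntzSubeq (pCut ε₁ (star v * v)) (pCut ε₁ ((1 - g) * a * (1 - g))) := by
    have := cuntz_flip v hε₁
    rwa [hvv] at this
  -- step 3
  have step3 : CuntzSubeq (pCut ε₂ (star u * u)) (pCut (ε₂ / 2) g) := by
    have f1 : CuntzSubeq (pCut ε₂ (star u * u)) (pCut ε₂ (q * a * q)) := by
      have := cuntz_flip u hε₂
      rwa [huu] at this
    have hqaq0 : (0:A) ≤ q * a * q := by
      have := star_left_conjugate_nonneg ha0 q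
      rwa [hqst] at this
    have hqaq : q * a * q ≤ (2:ℝ) • g := by
      have h1 : q * a * q ≤ q * 1 * q := by
        have := star_left_conjugate_le_conjugate ha1 q
        rwa [hqst] at this
      have h2 : q * (1:A) * q = m := by rw [mul_one, hq2]
      have h3 : m ≤ (2:ℝ) • g := by
        rw [← sub_nonneg, show ((2:ℝ) • g - m) = g * g by rw [hmdef]; abel]
        calc (0:A) ≤ star g * g := star_mul_self_nonneg g
          _ = g * g := by rw [hgst]
      calc q * a * q ≤ q * 1 * q := h1
        _ = m := h2
        _ ≤ (2:ℝ) • g := h3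
    have f2 : CuntzSubeq (pCut ε₂ (q * a * q)) (pCut ε₂ ((2:ℝ) • g)) :=
      cuntz_pCut_mono ε₂ hqaq0 (smul_nonneg (by norm_num) hg0) hqaq
    have f3 : CuntzSubeq (pCut ε₂ ((2:ℝ) • g)) (pCut (ε₂/2) g) := by
      rw [pCut_two_smul ε₂ hg0]
      exact cuntz_two_smul _
    exact cuntz_trans (cuntz_trans f1 f2) f3
  exact cuntz_diag step1 step2 step3

end Main

end Work

end CuntzAuxSection


/-- Let `A` be a unital C*-algebra, let `a, g ∈ A` with `0 ≤ a ≤ 1`, `0 ≤ g ≤ 1`,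
and let `ε₁, ε₂ ≥ 0`.  Then `(a - (ε₁ + ε₂))₊ ⊕ 0` is Cuntz subequivalent in `M₂(A)` to
`((1 - g) a (1 - g) - ε₁)₊ ⊕ (g - ε₂/2)₊`. -/
theorem statement3 {A : Type*} [CStarAlgebra A] [PartialOrder A] [StarOrderedRing A]
    (a g : A) (ha0 : 0 ≤ a) (ha1 : a ≤ 1) (hg0 : 0 ≤ g) (hg1 : g ≤ 1)
    (ε₁ ε₂ : ℝ) (hε₁ : 0 ≤ ε₁) (hε₂ : 0 ≤ ε₂) :
    CuntzSubeq (Matrix.diagonal ![posCut (ε₁ + ε₂) a, 0])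
      (Matrix.diagonal ![posCut ε₁ ((1 - g) * a * (1 - g)), posCut (ε₂ / 2) g]) := by
  have hcast : ∀ (ε : ℝ) (x : A), posCut ε x = Work.pCut ε x := fun _ _ => rfl
  simp only [hcast]
  exact Work.main a g ha0 ha1 hg0 hg1 ε₁ ε₂ hε₁ hε₂
end

section
/- Let A be a C*-algebra, let a, b be positive elements of A, and let δ > 0. If a ≾_A (b − δ)₊, then there exists a sequence (w_n) in A such that ‖a − w_n b w_n*‖ → 0 and ‖w_n‖ ≤ ‖a‖^{1/2} δ^{−1/2} for every n. -/
open Filter Topology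
open scoped ENNReal

open RC


section Statement4Aux

/-- The auxiliary function `t ↦ √((t - δ)⁺ / t)`. -/
noncomputable def s4fun (δ : ℝ) : ℝ → ℝ := fun t => Real.sqrt (max (t - δ) 0 / t)

lemma s4fun_zero {δ : ℝ} (hδ : 0 < δ) : s4fun δ 0 = 0 := by
  have : max ((0 : ℝ) - δ) 0 = 0 := max_eq_right (by linarith)
  simp [s4fun, this]

lemma s4fun_continuous {δ : ℝ} (hδ : 0 < δ) : Continuous (s4fun δ) := by
  rw [continuous_iff_continuousAt]
  intro t
  rcases lt_or_ge t δ with ht | ht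
  · have hev : s4fun δ =ᶠ[𝓝 t] fun _ => (0 : ℝ) := by
      filter_upwards [Iio_mem_nhds ht] with s hs
      have hs' : s < δ := hs
      have : max (s - δ) 0 = 0 := max_eq_right (by linarith)
      simp [s4fun, this]
    exact hev.continuousAt
  · have ht0 : t ≠ 0 := ne_of_gt (lt_of_lt_of_le hδ ht)
    have : ContinuousAt (fun t : ℝ => max (t - δ) 0 / t) t :=
      ContinuousAt.div (by fun_prop) continuousAt_id ht0
    exact Real.continuous_sqrt.continuousAt.comp this

lemma s4fun_mul_self {δ t : ℝ} (ht : 0 ≤ t) :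
    s4fun δ t * s4fun δ t = max (t - δ) 0 / t :=
  Real.mul_self_sqrt (div_nonneg (le_max_right _ _) ht)

lemma s4fun_mul_id {δ t : ℝ} (hδ : 0 < δ) (ht : 0 ≤ t) :
    s4fun δ t * (t * s4fun δ t) = max (t - δ) 0 := by
  have h1 : s4fun δ t * (t * s4fun δ t) = s4fun δ t * s4fun δ t * t := by ring
  rw [h1, s4fun_mul_self ht]
  rcases eq_or_lt_of_le ht with ht0 | ht0
  · have h2 : max ((0 : ℝ) - δ) 0 = 0 := max_eq_right (by linarith)
    rw [← ht0, h2]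
    simp
  · exact div_mul_cancel₀ _ (ne_of_gt ht0)

lemma s4fun_ineq {δ t : ℝ} (hδ : 0 < δ) (ht : 0 ≤ t) :
    0 ≤ s4fun δ t * (t * s4fun δ t) - δ * (s4fun δ t * s4fun δ t) := by
  rw [s4fun_mul_id hδ ht, s4fun_mul_self ht]
  rcases le_or_gt t δ with h1 | h1
  · have : max (t - δ) 0 = 0 := max_eq_right (by linarith)
    simp [this]
  · have hm : max (t - δ) 0 = t - δ := max_eq_left (by linarith)
    rw [hm, sub_nonneg, show δ * ((t - δ) / t) = (δ / t) * (t - δ) by ring]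
    exact mul_le_of_le_one_left (by linarith) ((div_le_one (by linarith)).mpr (by linarith))

end Statement4Aux

/-- Let `A` be a C*-algebra, let `a, b ≥ 0` in `A` and let `δ > 0`.
If `a ≾_A (b - δ)₊`, then there is a sequence `(wₙ)` in `A` with `‖a - wₙ b wₙ*‖ → 0` and
`‖wₙ‖ ≤ ‖a‖^{1/2} δ^{-1/2}` for every `n`. -/
theorem statement4 {A : Type*} [NonUnitalCStarAlgebra A] [PartialOrder A] [StarOrderedRing A]
    (a b : A) (ha : 0 ≤ a) (hb : 0 ≤ b) (δ : ℝ) (hδ : 0 < δ)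
    (h : CuntzSubeq a (posCutN δ b)) :
    ∃ w : ℕ → A,
      Tendsto (fun n => ‖a - w n * b * star (w n)‖) atTop (𝓝 0) ∧
        ∀ n, ‖w n‖ ≤ Real.sqrt ‖a‖ / Real.sqrt δ := by
  obtain ⟨v, hv⟩ := h
  by_cases ha0 : a = 0
  · refine ⟨fun _ => 0, ?_, fun n => ?_⟩
    · simpa [ha0] using (tendsto_const_nhds : Tendsto (fun _ : ℕ => (0 : ℝ)) atTop (𝓝 0))
    · simp only [norm_zero]
      positivity
  -- Notation and basic facts
  have hna : 0 < ‖a‖ := norm_pos_iff.mpr ha0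
  have hσ : ∀ t ∈ quasispectrum ℝ b, 0 ≤ t := quasispectrum_nonneg_of_nonneg b hb
  have hcont : ContinuousOn (s4fun δ) (quasispectrum ℝ b) :=
    (s4fun_continuous hδ).continuousOn
  have h00 : s4fun δ 0 = 0 := s4fun_zero hδ
  set H : A := cfcₙ (s4fun δ) b with hH
  have hHsa : IsSelfAdjoint H := IsSelfAdjoint.cfcₙ
  have hcont2 : ContinuousOn (fun t : ℝ => t * s4fun δ t) (quasispectrum ℝ b) :=
    ContinuousOn.mul continuousOn_id hcont
  have h002 : (fun t : ℝ => t * s4fun δ t) 0 = 0 := by simp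
  -- `H * (b * H) = cfcₙ (fun t => s4fun δ t * (t * s4fun δ t)) b`
  have Eb : cfcₙ (fun t : ℝ => t * s4fun δ t) b = b * H := by
    calc cfcₙ (fun t : ℝ => t * s4fun δ t) b
        = cfcₙ (fun t : ℝ => t) b * cfcₙ (s4fun δ) b :=
          cfcₙ_mul _ _ b continuousOn_id rfl hcont h00
      _ = b * H := by rw [cfcₙ_id' ℝ b]
  have EH : cfcₙ (fun t : ℝ => s4fun δ t * (t * s4fun δ t)) b = H * (b * H) := by
    rw [cfcₙ_mul _ _ b hcont h00 hcont2 h002, Eb]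
  -- `H * (b * H) = (b - δ)₊`
  have E1 : H * (b * H) = posCutN δ b := by
    rw [← EH, posCutN]
    exact cfcₙ_congr fun t ht => s4fun_mul_id hδ (hσ t ht)
  -- `δ • (H * H) ≤ H * (b * H)`
  have hcontHH : ContinuousOn (fun t : ℝ => s4fun δ t * s4fun δ t) (quasispectrum ℝ b) :=
    hcont.mul hcont
  have EHH : cfcₙ (fun t : ℝ => δ * (s4fun δ t * s4fun δ t)) b = δ • (H * H) := by
    rw [show (fun t : ℝ => δ * (s4fun δ t * s4fun δ t)) =
        (fun t : ℝ => δ • (s4fun δ t * s4fun δ t)) from rfl,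
      cfcₙ_smul δ _ b (hcontHH) (by simp [h00]),
      cfcₙ_mul _ _ b hcont h00 hcont h00]
  have E2 : δ • (H * H) ≤ H * (b * H) := by
    rw [← sub_nonneg, ← EH, ← EHH,
      ← cfcₙ_sub (fun t : ℝ => s4fun δ t * (t * s4fun δ t))
        (fun t : ℝ => δ * (s4fun δ t * s4fun δ t)) b (hcont.mul hcont2) (by simp [h00])
        (hcontHH.const_smul δ) (by simp [h00])]
    exact cfcₙ_nonneg fun t ht => s4fun_ineq hδ (hσ t ht)
  -- The sequence and the error terms
  set d : ℕ → A := fun n => v n * posCutN δ b * star (v n) with hd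
  set ε : ℕ → ℝ := fun n => ‖d n - a‖ with hε
  have hε0 : ∀ n, 0 ≤ ε n := fun n => norm_nonneg _
  have hεt : Tendsto ε atTop (𝓝 0) := by
    rw [tendsto_iff_norm_sub_tendsto_zero] at hv
    exact hv
  have hpos : ∀ n, 0 < ‖a‖ + ε n := fun n => by have := hε0 n; linarith
  set c : ℕ → ℝ := fun n => Real.sqrt (‖a‖ / (‖a‖ + ε n)) with hc
  have hc0 : ∀ n, 0 ≤ c n := fun n => Real.sqrt_nonneg _
  have hc2 : ∀ n, c n ^ 2 = ‖a‖ / (‖a‖ + ε n) := fun n =>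
    Real.sq_sqrt (div_nonneg hna.le (hpos n).le)
  have hc2le : ∀ n, c n ^ 2 ≤ 1 := fun n => by
    rw [hc2 n]
    exact div_le_one_of_le₀ (by have := hε0 n; linarith) (hpos n).le
  set u : ℕ → A := fun n => v n * H with hu
  -- `u n * b * star (u n) = d n`
  have hustar : ∀ n, star (u n) = H * star (v n) := fun n => by
    rw [hu]; simp only [star_mul, hHsa.star_eq]
  have hubu : ∀ n, u n * b * star (u n) = d n := by
    intro n
    rw [hustar n]
    show v n * H * b * (H * star (v n)) = d n
    calc v n * H * b * (H * star (v n)) = v n * (H * (b * H)) * star (v n) := by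
          simp only [mul_assoc]
      _ = v n * posCutN δ b * star (v n) := by rw [E1]
      _ = d n := rfl
  -- The key norm estimate: `δ * ‖u n‖ ^ 2 ≤ ‖d n‖`
  have hkey : ∀ n, δ * (‖u n‖ * ‖u n‖) ≤ ‖d n‖ := by
    intro n
    have h1 : v n * (δ • (H * H)) * star (v n) ≤ v n * (H * (b * H)) * star (v n) :=
      star_right_conjugate_le_conjugate E2 (v n)
    have h2 : v n * (δ • (H * H)) * star (v n) = δ • (u n * star (u n)) := by
      rw [hustar n, hu]
      simp only [mul_smul_comm, smul_mul_assoc, mul_assoc]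
    have h3 : v n * (H * (b * H)) * star (v n) = d n := by
      rw [← hubu n, hustar n, hu]
      simp only [mul_assoc]
    rw [h2, h3] at h1
    have h4 : 0 ≤ δ • (u n * star (u n)) := by
      have e : (Real.sqrt δ • u n) * star (Real.sqrt δ • u n) = δ • (u n * star (u n)) := by
        rw [star_smul, star_trivial (Real.sqrt δ), smul_mul_assoc, mul_smul_comm, smul_smul,
          Real.mul_self_sqrt hδ.le]
      exact e ▸ mul_star_self_nonneg _
    have h5 : ‖δ • (u n * star (u n))‖ ≤ ‖d n‖ :=
      CStarAlgebra.norm_le_norm_of_nonneg_of_le h4 h1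
    rwa [norm_smul, Real.norm_eq_abs, abs_of_pos hδ, CStarRing.norm_self_mul_star] at h5
  have hdle : ∀ n, ‖d n‖ ≤ ‖a‖ + ε n := by
    intro n
    calc ‖d n‖ = ‖a + (d n - a)‖ := by rw [add_sub_cancel]
    _ ≤ ‖a‖ + ‖d n - a‖ := norm_add_le _ _
    _ = ‖a‖ + ε n := rfl
  refine ⟨fun n => c n • u n, ?_, ?_⟩
  · -- convergence
    have hwbw : ∀ n, (c n • u n) * b * star (c n • u n) = (c n ^ 2) • d n := by
      intro n
      rw [star_smul, star_trivial (c n), smul_mul_assoc, smul_mul_assoc, mul_smul_comm,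
        smul_smul, ← sq, hubu n]
    have hbound : ∀ n, ‖a - (c n • u n) * b * star (c n • u n)‖ ≤ 2 * ε n := by
      intro n
      rw [hwbw n]
      calc ‖a - (c n ^ 2) • d n‖
          = ‖(a - d n) + (d n - (c n ^ 2) • d n)‖ := by congr 1; abel
        _ ≤ ‖a - d n‖ + ‖d n - (c n ^ 2) • d n‖ := norm_add_le _ _
        _ = ε n + ‖(1 - c n ^ 2) • d n‖ := by
            rw [sub_smul, one_smul, ← norm_sub_rev (d n) a]
        _ = ε n + (1 - c n ^ 2) * ‖d n‖ := by
            rw [norm_smul, Real.norm_eq_abs, abs_of_nonneg (by have := hc2le n; linarith)]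
        _ ≤ ε n + (1 - c n ^ 2) * (‖a‖ + ε n) := by
            have h1 : 0 ≤ 1 - c n ^ 2 := by have := hc2le n; linarith
            have := mul_le_mul_of_nonneg_left (hdle n) h1
            linarith
        _ = 2 * ε n := by
            rw [hc2 n]
            field_simp [(hpos n).ne']
            ring
    have h2ε : Tendsto (fun n => 2 * ε n) atTop (𝓝 0) := by
      simpa using hεt.const_mul 2
    exact squeeze_zero (fun n => norm_nonneg _) hbound h2ε
  · -- norm bound
    intro n
    have hn : ‖c n • u n‖ = c n * ‖u n‖ := by
      rw [norm_smul, Real.norm_eq_abs, abs_of_nonneg (hc0 n)]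
    rw [hn, ← Real.sqrt_div hna.le δ]
    rw [Real.le_sqrt (mul_nonneg (hc0 n) (norm_nonneg _)) (div_nonneg hna.le hδ.le)]
    have hu2 : ‖u n‖ * ‖u n‖ ≤ (‖a‖ + ε n) / δ := by
      rw [le_div_iff₀ hδ]
      calc ‖u n‖ * ‖u n‖ * δ = δ * (‖u n‖ * ‖u n‖) := by ring
        _ ≤ ‖d n‖ := hkey n
        _ ≤ ‖a‖ + ε n := hdle n
    calc (c n * ‖u n‖) ^ 2 = c n ^ 2 * (‖u n‖ * ‖u n‖) := by ring
      _ ≤ c n ^ 2 * ((‖a‖ + ε n) / δ) := by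
          exact mul_le_mul_of_nonneg_left hu2 (sq_nonneg _)
      _ = ‖a‖ / δ := by
          rw [hc2 n]
          field_simp [(hpos n).ne']
end

section
/- Let G be a finite group, let A be a C*-algebra, let α : G → Aut(A) be an action of G on A, and let a, b be positive elements of the fixed point algebra A^α. If a lies in the closure of b A b, then a lies in the closure of b A^α b, and a ≾_{A^α} b. -/
open Filter Topology
open scoped ENNReal

open RC

set_option linter.unusedSectionVars false
set_option linter.unusedVariables false

namespace S10

noncomputable def gfun (ε : ℝ) : ℝ → ℝ :=
  fun t => Real.sqrt (max t 0) / (max t 0 + ε)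

noncomputable def hfun (ε : ℝ) : ℝ → ℝ :=
  fun t => (max t 0 / (max t 0 + ε)) ^ 2

section Est
variable {ε : ℝ} (hep : 0 < ε)

include hep

lemma denom_pos (t : ℝ) : 0 < max t 0 + ε := by positivity

lemma gfun_cont : Continuous (gfun ε) := by
  apply Continuous.div
  · exact Real.continuous_sqrt.comp (continuous_id.max continuous_const)
  · exact (continuous_id.max continuous_const).add continuous_const
  · exact fun t => (denom_pos hep t).ne'

lemma hfun_cont : Continuous (hfun ε) := by
  apply Continuous.pow
  apply Continuous.div
  · exact continuous_id.max continuous_const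
  · exact (continuous_id.max continuous_const).add continuous_const
  · exact fun t => (denom_pos hep t).ne'

omit hep in
lemma gfun_zero : gfun ε 0 = 0 := by simp [gfun]

omit hep in
lemma hfun_zero : hfun ε 0 = 0 := by simp [hfun]

lemma est4 {t : ℝ} (ht : 0 ≤ t) : gfun ε t * t * gfun ε t = hfun ε t := by
  have hmax : max t 0 = t := max_eq_left ht
  have hd : t + ε ≠ 0 := by positivity
  simp only [gfun, hfun, hmax]
  rw [div_mul_eq_mul_div, div_mul_div_comm, mul_comm (Real.sqrt t) t, mul_assoc,
    Real.mul_self_sqrt ht, div_pow, sq, sq]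

lemma est2 {t : ℝ} (ht : 0 ≤ t) : |hfun ε t| ≤ 1 := by
  have hd := denom_pos hep t
  have h1 : max t 0 / (max t 0 + ε) ≤ 1 := by
    rw [div_le_one hd]; linarith
  have h0 : 0 ≤ max t 0 / (max t 0 + ε) := by positivity
  rw [hfun, abs_of_nonneg (by positivity)]
  nlinarith

lemma est1 {t : ℝ} (ht : 0 ≤ t) : |hfun ε t * t - t| ≤ 2 * ε := by
  have hmax : max t 0 = t := max_eq_left ht
  have hd : (0:ℝ) < t + ε := by positivity
  set u := t / (t + ε) with hu
  have hu0 : 0 ≤ u := by positivity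
  have hu1 : u ≤ 1 := by rw [hu, div_le_one hd]; linarith
  have hkey : (1 - u) * (t + ε) = ε := by rw [hu]; field_simp; ring
  have hform : hfun ε t = u ^ 2 := by rw [hfun, hmax]
  have h2 : t * ((1 - u) * (1 + u)) ≤ ε * (1 + u) := by
    have : t * ((1 - u) * (1 + u)) ≤ (t + ε) * ((1 - u) * (1 + u)) := by
      apply mul_le_mul_of_nonneg_right (by linarith)
      exact mul_nonneg (by linarith) (by linarith)
    calc t * ((1 - u) * (1 + u)) ≤ (t + ε) * ((1 - u) * (1 + u)) := this
      _ = ((1 - u) * (t + ε)) * (1 + u) := by ring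
      _ = ε * (1 + u) := by rw [hkey]
  rw [hform, abs_le]
  constructor
  · nlinarith
  · nlinarith

lemma est3 {t : ℝ} (ht : 0 ≤ t) :
    |t * gfun ε t - Real.sqrt t| ≤ Real.sqrt ε := by
  have hmax : max t 0 = t := max_eq_left ht
  have hd : (0:ℝ) < t + ε := by positivity
  have hform : t * gfun ε t - Real.sqrt t = -(Real.sqrt t * (ε / (t + ε))) := by
    simp only [gfun, hmax]
    field_simp
    ring
  rw [hform, abs_neg, abs_of_nonneg (by positivity)]
  have hst0 : 0 ≤ Real.sqrt t := Real.sqrt_nonneg t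
  have hse0 : 0 < Real.sqrt ε := Real.sqrt_pos.mpr hep
  have ht' : Real.sqrt t ^ 2 = t := Real.sq_sqrt ht
  have hε' : Real.sqrt ε ^ 2 = ε := Real.sq_sqrt hep.le
  rw [← mul_div_assoc, div_le_iff₀ hd]
  nlinarith [sq_nonneg (Real.sqrt t - Real.sqrt ε)]


end Est

section CStar

variable {A : Type*} [NonUnitalCStarAlgebra A] [PartialOrder A] [StarOrderedRing A]

lemma eps_pos (n : ℕ) : (0:ℝ) < ((n:ℝ)+1)⁻¹ := by positivity

lemma rightmul_closure (b w : A) {x : A}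
    (hx : x ∈ closure {y : A | ∃ c : A, y = b * c}) :
    x * w ∈ closure {y : A | ∃ c : A, y = b * c} := by
  have h := image_closure_subset_closure_image
    (f := fun z : A => z * w) (s := {y : A | ∃ c : A, y = b * c})
    (by fun_prop)
  have hx' : x * w ∈ (fun z : A => z * w) '' closure {y : A | ∃ c : A, y = b * c} :=
    ⟨x, hx, rfl⟩
  refine closure_mono ?_ (h hx')
  rintro _ ⟨_, ⟨c, rfl⟩, rfl⟩
  exact ⟨c * w, by simp [mul_assoc]⟩

lemma Hn_norm_le (b : A) (hb : 0 ≤ b) (n : ℕ) :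
    ‖cfcₙ (hfun ((n:ℝ)+1)⁻¹) b‖ ≤ 1 := by
  refine norm_cfcₙ_le fun t ht => ?_
  rw [Real.norm_eq_abs]
  exact est2 (eps_pos n) (quasispectrum_nonneg_of_nonneg b hb t ht)

lemma Hn_mul_b (b : A) (hb : 0 ≤ b) (n : ℕ) :
    ‖cfcₙ (hfun ((n:ℝ)+1)⁻¹) b * b - b‖ ≤ 2 * ((n:ℝ)+1)⁻¹ := by
  have hbs : IsSelfAdjoint b := hb.isSelfAdjoint
  have h1 : cfcₙ (fun t : ℝ => hfun ((n:ℝ)+1)⁻¹ t * t) b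
      = cfcₙ (hfun ((n:ℝ)+1)⁻¹) b * cfcₙ (id : ℝ → ℝ) b :=
    cfcₙ_mul _ _ b ((hfun_cont (eps_pos n)).continuousOn) (hfun_zero)
      continuous_id.continuousOn rfl
  rw [cfcₙ_id ℝ b] at h1
  have h2 : cfcₙ (fun t : ℝ => hfun ((n:ℝ)+1)⁻¹ t * t - t) b
      = cfcₙ (fun t : ℝ => hfun ((n:ℝ)+1)⁻¹ t * t) b - cfcₙ (id : ℝ → ℝ) b :=
    cfcₙ_sub _ _ b (((hfun_cont (eps_pos n)).mul continuous_id).continuousOn)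
      (by simp [hfun_zero]) continuous_id.continuousOn rfl
  rw [cfcₙ_id ℝ b, h1] at h2
  rw [← h2]
  refine norm_cfcₙ_le fun t ht => ?_
  rw [Real.norm_eq_abs]
  exact est1 (eps_pos n) (quasispectrum_nonneg_of_nonneg b hb t ht)

lemma approx_unit (b : A) (hb : 0 ≤ b) {x : A}
    (hx : x ∈ closure {y : A | ∃ c : A, y = b * c}) :
    Tendsto (fun n : ℕ => cfcₙ (hfun ((n:ℝ)+1)⁻¹) b * x) atTop (𝓝 x) := by
  rw [Metric.tendsto_atTop]
  intro δ hδ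
  obtain ⟨y, hy, hxy⟩ := Metric.mem_closure_iff.mp hx (δ/3) (by linarith)
  obtain ⟨c, rfl⟩ := hy
  have htend : Tendsto (fun n : ℕ => 2 * ((n:ℝ)+1)⁻¹ * ‖c‖) atTop (𝓝 0) := by
    have h1 : Tendsto (fun n : ℕ => ((n:ℝ)+1)⁻¹) atTop (𝓝 0) := by
      simpa [one_div] using tendsto_one_div_add_atTop_nhds_zero_nat (𝕜 := ℝ)
    simpa using (h1.const_mul 2).mul_const ‖c‖
  have hev : ∀ᶠ n : ℕ in atTop, 2 * ((n:ℝ)+1)⁻¹ * ‖c‖ < δ/3 :=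
    htend.eventually (gt_mem_nhds (by linarith))
  obtain ⟨N, hN⟩ := eventually_atTop.mp hev
  refine ⟨N, fun n hn => ?_⟩
  set H := cfcₙ (hfun ((n:ℝ)+1)⁻¹) b with hH
  have key : H * x - x = H * (x - b * c) + (H * b - b) * c + (b * c - x) := by
    noncomm_ring
  rw [dist_eq_norm, key]
  have e1 : ‖H * (x - b * c)‖ ≤ ‖x - b * c‖ := by
    calc ‖H * (x - b * c)‖ ≤ ‖H‖ * ‖x - b * c‖ := norm_mul_le _ _
      _ ≤ 1 * ‖x - b * c‖ := by
          exact mul_le_mul_of_nonneg_right (Hn_norm_le b hb n) (norm_nonneg _)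
      _ = ‖x - b * c‖ := one_mul _
  have e2 : ‖(H * b - b) * c‖ ≤ 2 * ((n:ℝ)+1)⁻¹ * ‖c‖ := by
    calc ‖(H * b - b) * c‖ ≤ ‖H * b - b‖ * ‖c‖ := norm_mul_le _ _
      _ ≤ 2 * ((n:ℝ)+1)⁻¹ * ‖c‖ :=
          mul_le_mul_of_nonneg_right (Hn_mul_b b hb n) (norm_nonneg _)
  have hd : ‖x - b * c‖ < δ/3 := by rwa [← dist_eq_norm]
  have hd' : ‖b * c - x‖ < δ/3 := by rwa [norm_sub_rev]
  calc ‖H * (x - b * c) + (H * b - b) * c + (b * c - x)‖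
      ≤ ‖H * (x - b * c) + (H * b - b) * c‖ + ‖b * c - x‖ := norm_add_le _ _
    _ ≤ ‖H * (x - b * c)‖ + ‖(H * b - b) * c‖ + ‖b * c - x‖ := by
        gcongr; exact norm_add_le _ _
    _ < δ/3 + δ/3 + δ/3 :=
        add_lt_add (add_lt_add (e1.trans_lt hd) (e2.trans_lt (hN n hn))) hd'
    _ = δ := by ring

lemma sqrt_mem (b : A) {x : A} (hx0 : 0 ≤ x)
    (hx : x ∈ closure {y : A | ∃ c : A, y = b * c}) :
    cfcₙ Real.sqrt x ∈ closure {y : A | ∃ c : A, y = b * c} := by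
  have hxs : IsSelfAdjoint x := hx0.isSelfAdjoint
  have hspec : ∀ t ∈ quasispectrum ℝ x, 0 ≤ t := quasispectrum_nonneg_of_nonneg x hx0
  have key : Tendsto (fun n : ℕ => x * cfcₙ (gfun ((n:ℝ)+1)⁻¹) x) atTop
      (𝓝 (cfcₙ Real.sqrt x)) := by
    rw [tendsto_iff_norm_sub_tendsto_zero]
    have hbnd : ∀ n : ℕ, ‖x * cfcₙ (gfun ((n:ℝ)+1)⁻¹) x - cfcₙ Real.sqrt x‖ ≤
        Real.sqrt ((n:ℝ)+1)⁻¹ := by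
      intro n
      have h1 : cfcₙ (fun t : ℝ => t * gfun ((n:ℝ)+1)⁻¹ t) x
          = cfcₙ (id : ℝ → ℝ) x * cfcₙ (gfun ((n:ℝ)+1)⁻¹) x :=
        cfcₙ_mul _ _ x continuous_id.continuousOn rfl
          ((gfun_cont (eps_pos n)).continuousOn) gfun_zero
      rw [cfcₙ_id ℝ x] at h1
      have h2 : cfcₙ (fun t : ℝ => t * gfun ((n:ℝ)+1)⁻¹ t - Real.sqrt t) x
          = cfcₙ (fun t : ℝ => t * gfun ((n:ℝ)+1)⁻¹ t) x - cfcₙ Real.sqrt x :=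
        cfcₙ_sub _ _ x (continuous_id.mul (gfun_cont (eps_pos n))).continuousOn
          (by simp [gfun_zero]) Real.continuous_sqrt.continuousOn Real.sqrt_zero
      rw [h1] at h2
      rw [← h2]
      refine norm_cfcₙ_le fun t ht => ?_
      rw [Real.norm_eq_abs]
      exact est3 (eps_pos n) (hspec t ht)
    refine squeeze_zero (fun n => norm_nonneg _) hbnd ?_
    have h1 : Tendsto (fun n : ℕ => ((n:ℝ)+1)⁻¹) atTop (𝓝 0) := by
      simpa [one_div] using tendsto_one_div_add_atTop_nhds_zero_nat (𝕜 := ℝ)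
    simpa [Function.comp_def] using (Real.continuous_sqrt.tendsto 0).comp h1
  exact isClosed_closure.mem_of_tendsto key
    (Filter.Eventually.of_forall fun n => rightmul_closure b _ hx)

lemma fix_cfcₙ {G : Type*} [Group G] (α : G → A ≃⋆ₐ[ℂ] A) {x : A} (hx : ∀ g, α g x = x)
    (hsa : IsSelfAdjoint x) (f : ℝ → ℝ) (hf : Continuous f) (hf0 : f 0 = 0) (g : G) :
    α g (cfcₙ f x) = cfcₙ f x := by
  have h := NonUnitalStarAlgHomClass.map_cfcₙ (R := ℝ) (S := ℂ) (α g) f x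
    hf.continuousOn hf0 ((StarAlgEquiv.isometry (α g)).continuous) hsa (by rw [hx g]; exact hsa)
  rw [h, hx g]

end CStar
end S10


open RC S10 in
theorem statement10' {G : Type*} [Group G] [Fintype G]
    {A : Type*} [NonUnitalCStarAlgebra A] [PartialOrder A] [StarOrderedRing A]
    (α : G → A ≃⋆ₐ[ℂ] A)
    (hα1 : ∀ x : A, α 1 x = x)
    (hαmul : ∀ (g h : G) (x : A), α (g * h) x = α g (α h x))
    (a b : A) (ha : 0 ≤ a) (hb : 0 ≤ b)
    (hafix : ∀ g, α g a = a) (hbfix : ∀ g, α g b = b)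
    (hmem : a ∈ closure {y : A | ∃ c : A, y = b * c * b}) :
    a ∈ closure {y : A | ∃ c : A, (∀ g, α g c = c) ∧ y = b * c * b} ∧
      (∃ v : ℕ → A, (∀ n, v n ∈ {y : A | ∀ g, α g y = y}) ∧
        Filter.Tendsto (fun n => v n * b * star (v n)) Filter.atTop (nhds a)) := by
  constructor
  · -- Part 1: averaging
    set P : A → A := fun x => (Fintype.card G : ℂ)⁻¹ • ∑ g, α g x with hP
    have hPcont : Continuous P := by
      apply Continuous.const_smul
      exact continuous_finset_sum _ fun g _ => (StarAlgEquiv.isometry (α g)).continuous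
    have hcard : (Fintype.card G : ℂ) ≠ 0 := Nat.cast_ne_zero.mpr Fintype.card_ne_zero
    have hPa : P a = a := by
      simp only [hP, hafix, Finset.sum_const, Finset.card_univ]
      rw [← Nat.cast_smul_eq_nsmul ℂ, smul_smul, inv_mul_cancel₀ hcard, one_smul]
    have hPfix : ∀ (x : A) (g : G), α g (P x) = P x := by
      intro x g
      have h1 : α g (P x) = (Fintype.card G : ℂ)⁻¹ • ∑ h, α g (α h x) := by
        rw [hP]
        simp only [map_smul, map_sum]
      have h2 : ∑ h, α g (α h x) = ∑ h, α h x := by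
        simp_rw [← hαmul]
        exact Fintype.sum_equiv (Equiv.mulLeft g) _ _ fun h => rfl
      rw [h1, h2]
    have hPy : ∀ c : A, P (b * c * b) = b * P c * b := by
      intro c
      have h1 : ∑ g, α g (b * c * b) = b * (∑ g, α g c) * b := by
        rw [Finset.mul_sum, Finset.sum_mul]
        refine Finset.sum_congr rfl fun g _ => ?_
        rw [map_mul, map_mul, hbfix]
      rw [hP]
      simp only [h1]
      rw [mul_smul_comm, smul_mul_assoc]
    have himg := image_closure_subset_closure_image (f := P)
      (s := {y : A | ∃ c : A, y = b * c * b}) hPcont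
    have hmem' : P a ∈ closure (P '' {y : A | ∃ c : A, y = b * c * b}) :=
      himg ⟨a, hmem, rfl⟩
    rw [hPa] at hmem'
    refine closure_mono ?_ hmem'
    rintro _ ⟨_, ⟨c, rfl⟩, rfl⟩
    exact ⟨P c, hPfix c, hPy c⟩
  · -- Part 2: Cuntz subequivalence in the fixed point algebra
    have hbs : IsSelfAdjoint b := hb.isSelfAdjoint
    have has : IsSelfAdjoint a := ha.isSelfAdjoint
    have hmem₂ : a ∈ closure {y : A | ∃ c : A, y = b * c} := by
      refine closure_mono ?_ hmem
      rintro _ ⟨c, rfl⟩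
      exact ⟨c * b, mul_assoc b c b⟩
    set s := cfcₙ Real.sqrt a with hs
    have hspa : ∀ t ∈ quasispectrum ℝ a, 0 ≤ t := quasispectrum_nonneg_of_nonneg a ha
    have hss : s * s = a := by
      have h1 : cfcₙ (fun t : ℝ => Real.sqrt t * Real.sqrt t) a = s * s :=
        cfcₙ_mul _ _ a Real.continuous_sqrt.continuousOn Real.sqrt_zero
          Real.continuous_sqrt.continuousOn Real.sqrt_zero
      have h2 : cfcₙ (fun t : ℝ => Real.sqrt t * Real.sqrt t) a = cfcₙ (id : ℝ → ℝ) a :=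
        cfcₙ_congr fun t ht => Real.mul_self_sqrt (hspa t ht)
      rw [← h1, h2, cfcₙ_id ℝ a]
    have hssa : IsSelfAdjoint s := cfcₙ_predicate _ a
    have hsfix : ∀ g, α g s = s := fun g =>
      fix_cfcₙ α hafix has Real.sqrt Real.continuous_sqrt Real.sqrt_zero g
    have hsmem : s ∈ closure {y : A | ∃ c : A, y = b * c} := sqrt_mem b ha hmem₂
    set Gn : ℕ → A := fun n => cfcₙ (gfun ((n:ℝ)+1)⁻¹) b with hGn
    set Hn : ℕ → A := fun n => cfcₙ (hfun ((n:ℝ)+1)⁻¹) b with hHn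
    have hspb : ∀ t ∈ quasispectrum ℝ b, 0 ≤ t := quasispectrum_nonneg_of_nonneg b hb
    have hGsa : ∀ n, IsSelfAdjoint (Gn n) := fun n => cfcₙ_predicate _ b
    have hGfix : ∀ n g, α g (Gn n) = Gn n := fun n g =>
      fix_cfcₙ α hbfix hbs _ (gfun_cont (eps_pos n)) gfun_zero g
    have hGbG : ∀ n, Gn n * b * Gn n = Hn n := by
      intro n
      have h1 : cfcₙ (fun t : ℝ => gfun ((n:ℝ)+1)⁻¹ t * t) b
          = Gn n * cfcₙ (id : ℝ → ℝ) b :=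
        cfcₙ_mul _ _ b ((gfun_cont (eps_pos n)).continuousOn) gfun_zero
          continuous_id.continuousOn rfl
      rw [cfcₙ_id ℝ b] at h1
      have h2 : cfcₙ (fun t : ℝ => (gfun ((n:ℝ)+1)⁻¹ t * t) * gfun ((n:ℝ)+1)⁻¹ t) b
          = cfcₙ (fun t : ℝ => gfun ((n:ℝ)+1)⁻¹ t * t) b * Gn n :=
        cfcₙ_mul _ _ b (((gfun_cont (eps_pos n)).mul continuous_id).continuousOn)
          (by simp [gfun_zero]) ((gfun_cont (eps_pos n)).continuousOn) gfun_zero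
      have h3 : cfcₙ (fun t : ℝ => (gfun ((n:ℝ)+1)⁻¹ t * t) * gfun ((n:ℝ)+1)⁻¹ t) b
          = cfcₙ (hfun ((n:ℝ)+1)⁻¹) b :=
        cfcₙ_congr fun t ht => est4 (eps_pos n) (hspb t ht)
      rw [h1] at h2
      show Gn n * b * Gn n = cfcₙ (hfun ((n:ℝ)+1)⁻¹) b
      rw [← h2, h3]
    refine ⟨fun n => s * Gn n, fun n g => ?_, ?_⟩
    · rw [map_mul, hsfix g, hGfix n g]
    · have hform : ∀ n, (s * Gn n) * b * star (s * Gn n) = s * (Hn n * s) := by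
        intro n
        rw [star_mul, (hGsa n).star_eq, hssa.star_eq, ← hGbG n]
        noncomm_ring
      simp only [hform]
      have htd : Filter.Tendsto (fun n => Hn n * s) Filter.atTop (nhds s) :=
        approx_unit b hb hsmem
      have := htd.const_mul s
      rwa [hss] at this


/-- Let `G` be a finite group acting on a C*-algebra `A` via `α`, and let
`a, b ≥ 0` be fixed points.  If `a ∈ cl(b A b)`, then `a ∈ cl(b A^α b)` and `a ≾_{A^α} b`. -/
theorem statement10 {G : Type*} [Group G] [Fintype G]
    {A : Type*} [NonUnitalCStarAlgebra A] [PartialOrder A] [StarOrderedRing A]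
    (α : G → A ≃⋆ₐ[ℂ] A)
    (hα1 : ∀ x : A, α 1 x = x)
    (hαmul : ∀ (g h : G) (x : A), α (g * h) x = α g (α h x))
    (a b : A) (ha : 0 ≤ a) (hb : 0 ≤ b)
    (hafix : ∀ g, α g a = a) (hbfix : ∀ g, α g b = b)
    (hmem : a ∈ closure {y : A | ∃ c : A, y = b * c * b}) :
    a ∈ closure {y : A | ∃ c : A, (∀ g, α g c = c) ∧ y = b * c * b} ∧
      CuntzSubeqIn {y : A | ∀ g, α g y = y} a b := by
  obtain ⟨h1, h2⟩ := statement10' α hα1 hαmul a b ha hb hafix hbfix hmem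
  exact ⟨h1, h2⟩
end

section
/- Let A be an infinite-dimensional simple unital C*-algebra, and let α : G → Aut(A) be an action of a finite group G on A which has the weak tracial Rokhlin property. Then for every ε > 0 and every positive b ∈ A^α with ‖b‖ = 1, there is a positive element x in the closure of b A b with ‖x‖ = 1 such that ‖x α_g(x)‖ < ε for all g ∈ G with g ≠ 1. -/
open Filter Topology
open scoped ENNReal

open RC

/-- Let `A` be an infinite-dimensional simple unital C*-algebra and `α` an action
of a finite group `G` on `A` with the weak tracial Rokhlin property.  Then for every `ε > 0`
and every positive `b ∈ A^α` with `‖b‖ = 1`, there is a positive `x ∈ cl(b A b)` with `‖x‖ = 1`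
such that `‖x α_g(x)‖ < ε` for all `g ≠ 1`. -/
theorem statement12 {G : Type*} [Group G] [Fintype G]
    {A : Type*} [CStarAlgebra A] [PartialOrder A] [StarOrderedRing A]
    (hdim : ¬ FiniteDimensional ℂ A) (hsimple : CStarSimple A)
    (α : G → A ≃⋆ₐ[ℂ] A)
    (hα1 : ∀ x : A, α 1 x = x)
    (hαmul : ∀ (g h : G) (x : A), α (g * h) x = α g (α h x))
    (hwtrp : WeakTracialRokhlin α)
    (ε : ℝ) (hε : 0 < ε)
    (b : A) (hb : 0 ≤ b) (hbfix : ∀ g, α g b = b) (hbnorm : ‖b‖ = 1) :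
    ∃ x ∈ closure {y : A | ∃ c : A, y = b * c * b},
      0 ≤ x ∧ ‖x‖ = 1 ∧ ∀ g : G, g ≠ 1 → ‖x * α g x‖ < ε := by
  classical
  set n : ℝ := (Fintype.card G : ℝ) with hn_def
  have hn : (1:ℝ) ≤ n := by
    have h := Fintype.card_pos (α := G)
    rw [hn_def]; exact_mod_cast h
  have hnpos : (0:ℝ) < n := lt_of_lt_of_le one_pos hn
  set δ : ℝ := min (1/(2*(n^2+3*n+1))) (ε/(192*n^4)) with hδ_def
  have hc1 : (0:ℝ) < 2*(n^2+3*n+1) := by nlinarith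
  have hne : n ≠ 0 := ne_of_gt hnpos
  have hc2 : (0:ℝ) < 192*n^4 := by nlinarith [pow_pos hnpos 4]
  have hδpos : 0 < δ := lt_min (div_pos one_pos hc1) (div_pos hε hc2)
  have hK1 : δ*(n^2+3*n+1) ≤ 1/2 := by
    have hcpos : (0:ℝ) < n^2+3*n+1 := by nlinarith
    have hcne : (n^2+3*n+1 : ℝ) ≠ 0 := ne_of_gt hcpos
    have h3 : δ ≤ 1/(2*(n^2+3*n+1)) := hδ_def ▸ min_le_left _ _
    have h4 := mul_le_mul_of_nonneg_right h3 hcpos.le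
    have h5 : 1/(2*(n^2+3*n+1))*(n^2+3*n+1) = 1/2 := by
      field_simp
    linarith
  have hK2 : δ*(96*n^4) ≤ ε/2 := by
    have h3 : δ ≤ ε/(192*n^4) := hδ_def ▸ min_le_right _ _
    have h4 := mul_le_mul_of_nonneg_right h3 (by positivity : (0:ℝ) ≤ 96*n^4)
    have h5 : ε/(192*n^4)*(96*n^4) = ε/2 := by
      field_simp; ring
    linarith
  obtain ⟨f, hf, horth, hcommF, heq, -, h6⟩ := hwtrp δ hδpos {b} b hb hbnorm
  have hcomm' : ∀ g, ‖b * f g - f g * b‖ < δ := fun g => hcommF g b (Finset.mem_singleton_self b)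
  have hfn : ∀ g, ‖f g‖ ≤ 1 := fun g => (hf g).2
  have hb1 : ‖b‖ ≤ 1 := le_of_eq hbnorm
  have hsb : star b = b := IsSelfAdjoint.of_nonneg hb
  have hsf : star (f 1) = f 1 := IsSelfAdjoint.of_nonneg (hf 1).1
  have bound : ∀ (x y z : A) (cx cy cz : ℝ), ‖x‖ ≤ cx → ‖y‖ ≤ cy → ‖z‖ ≤ cz →
      0 ≤ cx → 0 ≤ cy → ‖x*y*z‖ ≤ cx*cy*cz := by
    intro x y z cx cy cz hx hy hz hcx hcy
    calc ‖x*y*z‖ ≤ ‖x*y‖*‖z‖ := norm_mul_le _ _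
      _ ≤ (‖x‖*‖y‖)*‖z‖ :=
        mul_le_mul_of_nonneg_right (norm_mul_le x y) (norm_nonneg z)
      _ ≤ cx*cy*cz :=
        mul_le_mul (mul_le_mul hx hy (norm_nonneg y) hcx) hz (norm_nonneg z)
          (mul_nonneg hcx hcy)
  have nb : ∀ x y : A, ‖x‖ ≤ 1 → ‖y‖ ≤ 1 → ‖x*y‖ ≤ 1 := by
    intro x y hx hy
    calc ‖x*y‖ ≤ ‖x‖*‖y‖ := norm_mul_le _ _
      _ ≤ 1*1 := mul_le_mul hx hy (norm_nonneg y) zero_le_one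
      _ = 1 := one_mul 1
  set m : ℝ := ‖f 1 * b * f 1‖ with hm_def
  have hA : ∀ g : G, ‖f g * b * f g‖ ≤ m + 2*δ := by
    intro g
    set u := α g (f 1) with hu_def
    have hu : ‖u - f g‖ < δ := by rw [hu_def]; simpa using heq g 1
    have hun : ‖u‖ ≤ 1 := by rw [hu_def, StarAlgEquiv.norm_map]; exact hfn 1
    have hub : ‖u * b * u‖ = m := by
      have h1 : u * b * u = α g (f 1 * b * f 1) := by
        rw [hu_def, map_mul, map_mul, hbfix]
      rw [h1, StarAlgEquiv.norm_map]
    have hfgu : ‖f g - u‖ ≤ δ := by rw [← norm_neg]; simpa [neg_sub] using hu.le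
    have hdec : f g * b * f g = u * b * u + ((f g - u) * b * f g + u * b * (f g - u)) := by
      noncomm_ring
    have e1 : ‖(f g - u) * b * f g‖ ≤ δ := by
      have := bound (f g - u) b (f g) δ 1 1 hfgu hb1 (hfn g) hδpos.le zero_le_one
      linarith
    have e2 : ‖u * b * (f g - u)‖ ≤ δ := by
      have := bound u b (f g - u) 1 1 δ hun hb1 hfgu zero_le_one zero_le_one
      linarith
    calc ‖f g * b * f g‖
        ≤ ‖u * b * u‖ + ‖(f g - u) * b * f g + u * b * (f g - u)‖ := by
          rw [hdec]; exact norm_add_le _ _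
      _ ≤ m + (δ + δ) := by
          have := norm_add_le ((f g - u) * b * f g) (u * b * (f g - u))
          rw [hub]; linarith
      _ = m + 2*δ := by ring
  set S : A := ∑ g : G, f g with hS_def
  set D : A := ∑ g : G, f g * b * f g with hD_def
  have hexp : S * b * S = ∑ g : G, ∑ h : G, f g * b * f h := by
    rw [hS_def, Finset.sum_mul, Finset.sum_mul]
    exact Finset.sum_congr rfl fun g _ => Finset.mul_sum _ _ _
  have hterm : ∀ g h : G, h ≠ g → ‖f g * b * f h‖ ≤ δ := by
    intro g h hne
    have h0 : f g * f h = 0 := horth g h (Ne.symm hne)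
    have hdec : f g * b * f h = f g * (b * f h - f h * b) + (f g * f h) * b := by noncomm_ring
    rw [hdec, h0, zero_mul, add_zero]
    calc ‖f g * (b * f h - f h * b)‖ ≤ ‖f g‖ * ‖b * f h - f h * b‖ := norm_mul_le _ _
      _ ≤ 1 * δ := mul_le_mul (hfn g) (hcomm' h).le (norm_nonneg _) zero_le_one
      _ = δ := one_mul δ
  have hDoff : ‖S * b * S - D‖ ≤ n*(n*δ) := by
    rw [hexp, hD_def, ← Finset.sum_sub_distrib]
    calc ‖∑ g : G, ((∑ h : G, f g * b * f h) - f g * b * f g)‖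
        ≤ ∑ g : G, ‖(∑ h : G, f g * b * f h) - f g * b * f g‖ := norm_sum_le _ _
      _ ≤ ∑ _g : G, n*δ := by
          apply Finset.sum_le_sum
          intro g _
          have hsplit : (∑ h : G, f g * b * f h) - f g * b * f g
              = ∑ h ∈ Finset.univ.erase g, f g * b * f h := by
            rw [← Finset.add_sum_erase _ _ (Finset.mem_univ g), add_sub_cancel_left]
          rw [hsplit]
          calc ‖∑ h ∈ Finset.univ.erase g, f g * b * f h‖
              ≤ ∑ h ∈ Finset.univ.erase g, ‖f g * b * f h‖ := norm_sum_le _ _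
            _ ≤ ∑ _h ∈ Finset.univ.erase g, δ :=
                Finset.sum_le_sum fun h hh => hterm g h (Finset.mem_erase.mp hh).1
            _ = ((Finset.univ.erase g).card : ℝ) * δ := by
                rw [Finset.sum_const, nsmul_eq_mul]
            _ ≤ n * δ := by
                apply mul_le_mul_of_nonneg_right _ hδpos.le
                rw [hn_def]
                exact_mod_cast Finset.card_erase_le.trans (le_of_eq Finset.card_univ)
      _ = ((Fintype.card G : ℝ)) * (n*δ) := by
          rw [Finset.sum_const, nsmul_eq_mul, Finset.card_univ]
      _ = n*(n*δ) := by rw [hn_def]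
  have hDub : ‖D‖ ≤ n*(m + 2*δ) := by
    rw [hD_def]
    calc ‖∑ g : G, f g * b * f g‖ ≤ ∑ g : G, ‖f g * b * f g‖ := norm_sum_le _ _
      _ ≤ ∑ _g : G, (m + 2*δ) := Finset.sum_le_sum fun g _ => hA g
      _ = n*(m+2*δ) := by
          rw [Finset.sum_const, nsmul_eq_mul, Finset.card_univ, hn_def]
  have hSbS : 1 - δ < ‖S * b * S‖ := h6
  have hDlb : 1 - δ - n*(n*δ) ≤ ‖D‖ := by
    have h1 : ‖S * b * S‖ ≤ ‖D‖ + ‖S * b * S - D‖ := by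
      calc ‖S * b * S‖ = ‖D + (S * b * S - D)‖ := by rw [add_sub_cancel]
        _ ≤ ‖D‖ + ‖S * b * S - D‖ := norm_add_le _ _
    linarith
  have hm0 : 0 ≤ m := norm_nonneg _
  have hm_lb : 1/(2*n) ≤ m := by
    rw [div_le_iff₀ (by nlinarith : (0:ℝ) < 2*n)]
    nlinarith [hDlb, hDub, hK1, hδpos.le, hnpos]
  set z : A := b * (f 1 * f 1) * b with hz_def
  have hzsw : z = star (f 1 * b) * (f 1 * b) := by
    rw [hz_def, star_mul, hsb, hsf]; noncomm_ring
  have hz_nonneg : 0 ≤ z := hzsw ▸ star_mul_self_nonneg _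
  have hznorm : ‖z‖ = ‖f 1 * b‖ * ‖f 1 * b‖ := by
    rw [hzsw, CStarRing.norm_star_mul_self]
  have hwm : m ≤ ‖f 1 * b‖ := by
    calc m ≤ ‖f 1 * b‖ * ‖f 1‖ := norm_mul_le _ _
      _ ≤ ‖f 1 * b‖ * 1 := mul_le_mul_of_nonneg_left (hfn 1) (norm_nonneg _)
      _ = ‖f 1 * b‖ := mul_one _
  have hz_lb : 1/(4*n^2) ≤ ‖z‖ := by
    have h1 : (1/(2*n))*(1/(2*n)) ≤ m*m :=
      mul_le_mul hm_lb hm_lb (by positivity) hm0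
    have h2 : m*m ≤ ‖f 1 * b‖ * ‖f 1 * b‖ :=
      mul_le_mul hwm hwm hm0 (norm_nonneg _)
    have h3 : (1/(2*n))*(1/(2*n)) = 1/(4*n^2) := by
      field_simp; ring
    rw [hznorm]; linarith
  have hz0 : 0 < ‖z‖ := lt_of_lt_of_le (by positivity) hz_lb
  have hzinv : ‖z‖⁻¹ ≤ 4*n^2 := by
    have h1 : (0:ℝ) < 1/(4*n^2) := by positivity
    have h2 := inv_anti₀ h1 hz_lb
    rwa [one_div, inv_inv] at h2
  have hzinv0 : (0:ℝ) ≤ ‖z‖⁻¹ := inv_nonneg.mpr (norm_nonneg z)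
  refine ⟨‖z‖⁻¹ • z, ?_, ?_, ?_, ?_⟩
  · apply subset_closure
    refine ⟨‖z‖⁻¹ • (f 1 * f 1), ?_⟩
    rw [mul_smul_comm, smul_mul_assoc, ← hz_def]
  · exact smul_nonneg hzinv0 hz_nonneg
  · rw [norm_smul, Real.norm_eq_abs, abs_of_nonneg hzinv0, inv_mul_cancel₀ hz0.ne']
  · intro g hg
    set u := α g (f 1) with hu_def
    set v := f g with hv_def
    have hαz : α g z = b * (u * u) * b := by
      simp only [hz_def, hu_def, map_mul, hbfix]
    have hfv : f 1 * v = 0 := horth 1 g (fun h => hg h.symm)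
    have huv : ‖u - v‖ < δ := by rw [hu_def, hv_def]; simpa using heq g 1
    have hun : ‖u‖ ≤ 1 := by rw [hu_def, StarAlgEquiv.norm_map]; exact hfn 1
    have hvn : ‖v‖ ≤ 1 := hfn g
    have hid : b*(f 1*f 1)*b * (b*(u*u)*b)
        = (b*(f 1*f 1)*(b*b)) * (u*u - v*v) * b
          + b * ((f 1*f 1)*(b*b) - (b*b)*(f 1*f 1)) * ((v*v)*b)
          + b*((b*b)*((f 1*(f 1*v))*(v*b))) := by noncomm_ring
    have hzz : z * α g z = (b*(f 1*f 1)*(b*b)) * (u*u - v*v) * b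
          + b * ((f 1*f 1)*(b*b) - (b*b)*(f 1*f 1)) * ((v*v)*b) := by
      rw [hαz, hz_def, hid, hfv]
      simp
    have c1 : ‖b*(f 1*f 1)*(b*b)‖ ≤ 1 :=
      nb _ _ (nb _ _ hb1 (nb _ _ (hfn 1) (hfn 1))) (nb _ _ hb1 hb1)
    have huv2 : ‖u*u - v*v‖ ≤ 2*δ := by
      have hdec : u*u - v*v = u*(u - v) + (u - v)*v := by noncomm_ring
      have e1 : ‖u*(u - v)‖ ≤ δ := by
        calc ‖u*(u - v)‖ ≤ ‖u‖*‖u - v‖ := norm_mul_le _ _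
          _ ≤ 1*δ := mul_le_mul hun huv.le (norm_nonneg _) zero_le_one
          _ = δ := one_mul δ
      have e2 : ‖(u - v)*v‖ ≤ δ := by
        calc ‖(u - v)*v‖ ≤ ‖u - v‖*‖v‖ := norm_mul_le _ _
          _ ≤ δ*1 := mul_le_mul huv.le hvn (norm_nonneg _) hδpos.le
          _ = δ := mul_one δ
      calc ‖u*u - v*v‖ = ‖u*(u - v) + (u - v)*v‖ := by rw [hdec]
        _ ≤ ‖u*(u - v)‖ + ‖(u - v)*v‖ := norm_add_le _ _
        _ ≤ 2*δ := by linarith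
    have hXn : ‖(b*(f 1*f 1)*(b*b)) * (u*u - v*v) * b‖ ≤ 2*δ := by
      have := bound _ _ _ 1 (2*δ) 1 c1 huv2 hb1 zero_le_one (by positivity)
      linarith
    have he : ‖f 1 * b - b * f 1‖ ≤ δ := by
      rw [← norm_neg]; simpa [neg_sub] using (hcomm' 1).le
    have hid2 : (f 1*f 1)*(b*b) - (b*b)*(f 1*f 1)
        = b*(f 1*b - b*f 1)*(f 1) + b*(f 1)*(f 1*b - b*f 1)
          + (f 1*b - b*f 1)*(f 1)*b + (f 1)*(f 1*b - b*f 1)*b := by noncomm_ring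
    have hcomm4 : ‖(f 1*f 1)*(b*b) - (b*b)*(f 1*f 1)‖ ≤ 4*δ := by
      have t1 := bound b (f 1*b - b*f 1) (f 1) 1 δ 1 hb1 he (hfn 1) zero_le_one hδpos.le
      have t2 := bound b (f 1) (f 1*b - b*f 1) 1 1 δ hb1 (hfn 1) he zero_le_one zero_le_one
      have t3 := bound (f 1*b - b*f 1) (f 1) b δ 1 1 he (hfn 1) hb1 hδpos.le zero_le_one
      have t4 := bound (f 1) (f 1*b - b*f 1) b 1 δ 1 (hfn 1) he hb1 zero_le_one hδpos.le
      rw [hid2]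
      refine le_trans (norm_add_le _ _) ?_
      refine le_trans (add_le_add (norm_add_le _ _) t4) ?_
      refine le_trans (add_le_add_left (add_le_add (norm_add_le _ _) t3) _) ?_
      refine le_trans (add_le_add_left (add_le_add_left (add_le_add t1 t2) _) _) ?_
      linarith
    have hYn : ‖b * ((f 1*f 1)*(b*b) - (b*b)*(f 1*f 1)) * ((v*v)*b)‖ ≤ 4*δ := by
      have cz : ‖(v*v)*b‖ ≤ 1 := nb _ _ (nb _ _ hvn hvn) hb1
      have := bound b _ _ 1 (4*δ) 1 hb1 hcomm4 cz zero_le_one (by positivity)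
      linarith
    have hkey : ‖z * α g z‖ ≤ 6*δ := by
      rw [hzz]
      refine le_trans (norm_add_le _ _) ?_
      linarith
    have hreal : α g (‖z‖⁻¹ • z) = ‖z‖⁻¹ • α g z := by
      rw [← algebraMap_smul ℂ (‖z‖⁻¹) z, map_smul, algebraMap_smul]
    have hxg : (‖z‖⁻¹ • z) * α g (‖z‖⁻¹ • z) = (‖z‖⁻¹ * ‖z‖⁻¹) • (z * α g z) := by
      rw [hreal, smul_mul_smul_comm]
    rw [hxg, norm_smul, Real.norm_eq_abs, abs_of_nonneg (mul_nonneg hzinv0 hzinv0)]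
    have h1 : ‖z‖⁻¹*‖z‖⁻¹ ≤ (4*n^2)*(4*n^2) := mul_le_mul hzinv hzinv hzinv0 (by positivity)
    have h2 : (‖z‖⁻¹*‖z‖⁻¹) * ‖z * α g z‖ ≤ ((4*n^2)*(4*n^2)) * (6*δ) :=
      mul_le_mul h1 hkey (norm_nonneg _) (by positivity)
    have h3 : ((4*n^2)*(4*n^2)) * (6*δ) = δ*(96*n^4) := by ring
    linarith
end
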